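/- arXiv:1707.02337 — 7 statements merged into one kernel-verified Lean document; each statement's English description precedes it below -/
import Mathlib

section
/- Let C ⊆ F_q^{n×t} be an F_q-linear array code and i* a node index. If there is a linear repair scheme for node i* from a set S (i* ∉ S) with bandwidth b, then there exist t matrices W^{(0)},…,W^{(t−1)} ∈ C^⊥ whose nonzero rows are contained in S ∪ {i*}, such that {W^{(j)}_{i*,·} : j ∈ [0,t−1]} has dimension t and Σ_{i∈S} dim span{W^{(j)}_{i,·} : j ∈ [0,t−1]} ≤ b. -/
open Matrix

/-- conversely, a linear repair scheme for node `i*` from `S`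
(per-entry linear functionals `w i j` applied to the rows of the helper nodes,
with total query-space dimension at most `b`) yields `t` repair matrices in the
dual code supported on `S ∪ {i*}`, with full-dimensional row `i*` and total
row-span dimensions over `S` at most `b`. -/
theorem repair_scheme_gives_repair_matrices {n t b : ℕ} (K : Type*) [Field K] [Fintype K]
    (𝒞 : Set (Matrix (Fin n) (Fin t) K))
    (hadd : ∀ C C', C ∈ 𝒞 → C' ∈ 𝒞 → C + C' ∈ 𝒞)
    (hsmul : ∀ (c : K) (C), C ∈ 𝒞 → c • C ∈ 𝒞)
    (istar : Fin n) (S : Finset (Fin n)) (hiS : istar ∉ S)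
    (w : Fin n → Fin t → (Fin t → K))
    (hrec : ∀ C ∈ 𝒞, ∀ j : Fin t, C istar j = ∑ i ∈ S, ∑ r, w i j r * C i r)
    (hbw : ∑ i ∈ S,
      Module.finrank K (Submodule.span K (Set.range fun j => w i j)) ≤ b) :
    ∃ W : Fin t → Matrix (Fin n) (Fin t) K,
      (∀ j, ∀ C ∈ 𝒞, ∑ r, ∑ c, (W j) r c * C r c = 0) ∧
      (∀ (j) (i : Fin n), i ∉ S → i ≠ istar → W j i = 0) ∧
      Module.finrank K (Submodule.span K (Set.range fun j => W j istar)) = t ∧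
      ∑ i ∈ S,
        Module.finrank K (Submodule.span K (Set.range fun j => W j i)) ≤ b := by
  refine ⟨fun j i c => if i = istar then (if c = j then -1 else 0)
    else if i ∈ S then w i j c else 0, ?_, ?_, ?_, ?_⟩
  · intro j C hC
    have hsub : (insert istar S : Finset (Fin n)) ⊆ Finset.univ := Finset.subset_univ _
    have hzero : ∀ r ∈ Finset.univ, r ∉ insert istar S →
        (∑ c, (if r = istar then (if c = j then (-1:K) else 0)
          else if r ∈ S then w r j c else 0) * C r c) = 0 := by
      intro r _ hr
      simp only [Finset.mem_insert, not_or] at hr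
      simp [hr.1, hr.2]
    rw [← Finset.sum_subset hsub hzero, Finset.sum_insert hiS]
    have h1 : (∑ c, (if istar = istar then (if c = j then (-1:K) else 0)
        else if istar ∈ S then w istar j c else 0) * C istar c) = -C istar j := by
      simp
    have h2 : ∀ i ∈ S, (∑ c, (if i = istar then (if c = j then (-1:K) else 0)
        else if i ∈ S then w i j c else 0) * C i c) = ∑ c, w i j c * C i c := by
      intro i hi
      have : i ≠ istar := fun h => hiS (h ▸ hi)
      simp [this, hi]
    rw [h1, Finset.sum_congr rfl h2, ← hrec C hC j]
    ring
  · intro j i hiS' hne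
    funext c
    simp [hne, hiS']
  · have hspan : Submodule.span K (Set.range fun j : Fin t =>
        (fun c => if istar = istar then (if c = j then (-1:K) else 0)
          else if istar ∈ S then w istar j c else 0)) = ⊤ := by
      rw [eq_top_iff]
      intro x _
      have hx : x = ∑ j : Fin t, x j • (Pi.single j 1 : Fin t → K) := by
        funext c
        simp [Pi.single_apply, Finset.sum_ite_eq]
      rw [hx]
      refine Submodule.sum_mem _ fun j _ => Submodule.smul_mem _ _ ?_
      have : Pi.single j (1:K) = (-1 : K) • (fun c => if istar = istar then
          (if c = j then (-1:K) else 0) else if istar ∈ S then w istar j c else 0) := by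
        funext c
        by_cases h : c = j <;> simp [Pi.single_apply, h]
      rw [this]
      exact Submodule.smul_mem _ _ (Submodule.subset_span ⟨j, rfl⟩)
    rw [hspan, finrank_top]
    simp
  · refine le_trans (le_of_eq ?_) hbw
    refine Finset.sum_congr rfl fun i hi => ?_
    have hne : i ≠ istar := fun h => hiS (h ▸ hi)
    have hfun : (fun j : Fin t => fun c => if i = istar then (if c = j then (-1:K) else 0)
        else if i ∈ S then w i j c else 0) = fun j => w i j := by
      funext j c
      simp [hne, hi]
    show Module.finrank K (Submodule.span K (Set.range fun j : Fin t => fun c =>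
        if i = istar then (if c = j then (-1:K) else 0)
        else if i ∈ S then w i j c else 0)) = _
    rw [hfun]
end

section
/- Let C be a piggybacking code over F_q with base code generated by F ∈ F_q^{k×n} where any k columns of F are linearly independent (MDS). If W ∈ C^⊥ and column index i is the rightmost nonzero column of W (i.e., w_{·,j} = 0 for all j > i and w_{·,i} ≠ 0), then w_{·,i} has at least k+1 nonzero entries. -/
open Matrix

/-- `G` generates an MDS code: any `k` columns of `G` are linearly independent. -/
def IsMDS {n k : ℕ} {K : Type*} [Field K] (G : Matrix (Fin k) (Fin n) K) : Prop :=
  ∀ s : Finset (Fin n), s.card = k →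
    LinearIndependent K (fun j : s => fun r : Fin k => G r j.1)

/-- The piggybacking code with base generator `G` and piggybacking matrices `P i j`. -/
def piggyCode {n t k : ℕ} {K : Type*} [Field K]
    (G : Matrix (Fin k) (Fin n) K) (P : Fin t → Fin t → Matrix (Fin k) (Fin n) K) :
    Set (Matrix (Fin n) (Fin t) K) :=
  {C | ∃ a : Fin t → (Fin k → K), ∀ (r : Fin n) (j : Fin t),
    C r j = (∑ i ∈ Finset.Iio j, (a i) ᵥ* (P i j)) r + ((a j) ᵥ* G) r}

/-- if `W` is in the dual of a piggybacking code with MDS base generator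
`G`, and column `i` is the rightmost nonzero column of `W`, then column `i` has at
least `k+1` nonzero entries. -/
theorem rightmost_column_weight {n t k : ℕ} (K : Type*) [Field K] [Fintype K]
    [DecidableEq K]
    (hkn : k ≤ n)
    (G : Matrix (Fin k) (Fin n) K) (hMDS : IsMDS G)
    (P : Fin t → Fin t → Matrix (Fin k) (Fin n) K)
    (W : Matrix (Fin n) (Fin t) K)
    (hW : ∀ C ∈ piggyCode G P, ∑ r, ∑ j, W r j * C r j = 0)
    (i : Fin t)
    (hright : ∀ j : Fin t, i < j → (fun r => W r j) = 0)
    (hnz : (fun r => W r i) ≠ 0) :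
    k + 1 ≤ (Finset.univ.filter fun r : Fin n => W r i ≠ 0).card := by
  -- Step 1: the column x = W · i lies in the kernel of G
  have hker : ∀ m : Fin k, ∑ r, W r i * G m r = 0 := by
    intro m
    have a : Fin t → (Fin k → K) := fun j => if j = i then Pi.single m 1 else 0
    set a : Fin t → (Fin k → K) := fun j => if j = i then Pi.single m 1 else 0 with ha
    set C : Matrix (Fin n) (Fin t) K := fun r j =>
      (∑ i' ∈ Finset.Iio j, (a i') ᵥ* (P i' j)) r + ((a j) ᵥ* G) r with hC
    have hmem : C ∈ piggyCode G P := ⟨a, fun r j => rfl⟩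
    have h0 := hW C hmem
    rw [Finset.sum_comm] at h0
    have hzero : ∀ j : Fin t, j ≠ i → ∑ r, W r j * C r j = 0 := by
      intro j hj
      rcases lt_or_gt_of_ne hj with hji | hij
      · have hC0 : ∀ r, C r j = 0 := by
          intro r
          have h1 : ∀ i' ∈ Finset.Iio j, (a i') ᵥ* (P i' j) = 0 := by
            intro i' hi'
            have : i' ≠ i := by
              intro h; subst h; exact absurd (Finset.mem_Iio.mp hi') (not_lt.mpr hji.le)
            simp [ha, this, Matrix.zero_vecMul]
          have h2 : a j = 0 := by simp [ha, hj]
          have h4 : ∑ c ∈ Finset.Iio j, (a c ᵥ* P c j) r = 0 :=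
            Finset.sum_eq_zero fun c hc => by rw [h1 c hc]; rfl
          simp [hC, h2, Finset.sum_apply, h4, Matrix.zero_vecMul]
        simp [hC0]
      · have := hright j hij
        have hW0 : ∀ r, W r j = 0 := fun r => congrFun this r
        simp [hW0]
    have hsingle : ∑ j, ∑ r, W r j * C r j = ∑ r, W r i * C r i := by
      rw [Finset.sum_eq_single i]
      · exact fun j _ hj => hzero j hj
      · intro h; exact absurd (Finset.mem_univ i) h
    have hCi : ∀ r, C r i = G m r := by
      intro r
      have h1 : ∀ i' ∈ Finset.Iio i, (a i') ᵥ* (P i' i) = 0 := by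
        intro i' hi'
        have : i' ≠ i := ne_of_lt (Finset.mem_Iio.mp hi')
        simp [ha, this, Matrix.zero_vecMul]
      have h2 : a i = Pi.single m 1 := by simp [ha]
      have h4 : ∑ c ∈ Finset.Iio i, (a c ᵥ* P c i) r = 0 :=
        Finset.sum_eq_zero fun c hc => by rw [h1 c hc]; rfl
      show (∑ i' ∈ Finset.Iio i, a i' ᵥ* P i' i) r + (a i ᵥ* G) r = G m r
      rw [Finset.sum_apply, h4, zero_add, h2]
      simp [Matrix.vecMul, dotProduct, Pi.single_apply]
    rw [hsingle] at h0
    rw [← h0]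
    exact Finset.sum_congr rfl fun r _ => by rw [hCi]
  -- Step 2: suppose support has ≤ k elements, derive contradiction
  by_contra hlt
  push_neg at hlt
  have hcard : (Finset.univ.filter fun r : Fin n => W r i ≠ 0).card ≤ k := by omega
  obtain ⟨s, hsub, hs⟩ := Finset.exists_superset_card_eq hcard (by simpa using hkn)
  have hLI := hMDS s hs
  rw [Fintype.linearIndependent_iff] at hLI
  have hall := hLI (fun j => W j.1 i) ?_
  · -- all entries zero: contradiction with hnz
    apply hnz
    funext r
    by_cases hr : W r i = 0
    · exact hr
    · have : r ∈ s := hsub (Finset.mem_filter.mpr ⟨Finset.mem_univ r, hr⟩)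
      exact hall ⟨r, this⟩
  · have heq : ∀ m : Fin k, ∑ j : s, W j.1 i * G m j.1 = 0 := by
      intro m
      rw [Finset.sum_coe_sort s (fun r => W r i * G m r)]
      rw [Finset.sum_subset (Finset.subset_univ s)]
      · exact hker m
      · intro r _ hr
        have : W r i = 0 := by
          by_contra h
          exact hr (hsub (Finset.mem_filter.mpr ⟨Finset.mem_univ r, h⟩))
        simp [this]
    funext m
    simp only [Finset.sum_apply, Pi.smul_apply, smul_eq_mul, Pi.zero_apply]
    exact heq m
end

section
/- Let C be an (n,k) piggybacking code over F_q with t = 2 substripes (base code MDS of dimension k, 2 ≤ k, k+2 ≤ n) that admits, for some node i* and repair set S of size k+1, a linear repair scheme with perfect bandwidth b = k+1. Then q ≥ k+1. -/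
open Matrix

lemma aux_pair_indep {K V : Type*} [Field K] [AddCommGroup V] [Module K V] {x y : V}
    (h : Module.finrank K (Submodule.span K ({x, y} : Set V)) = 2) :
    ∀ a b : K, a • x + b • y = 0 → a = 0 ∧ b = 0 := by
  intro a b hab
  by_contra hc
  rw [not_and_or] at hc
  have hone : ∀ z w : V, z ∈ Submodule.span K ({w} : Set V) →
      Module.finrank K (Submodule.span K (insert z {w} : Set V)) ≤ 1 := by
    intro z w hzw
    rw [Submodule.span_insert_eq_span hzw]
    rcases eq_or_ne w 0 with rfl | hw
    · rw [Submodule.span_zero_singleton]; simp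
    · rw [finrank_span_singleton hw]
  have hle : Module.finrank K (Submodule.span K ({x, y} : Set V)) ≤ 1 := by
    rcases hc with ha | hb
    · have hx : x ∈ Submodule.span K ({y} : Set V) := by
        rw [Submodule.mem_span_singleton]
        refine ⟨-(a⁻¹ * b), ?_⟩
        have h2 : a • x = -(b • y) := by
          rw [eq_neg_iff_add_eq_zero]; exact hab
        have h3 := congrArg (fun v => a⁻¹ • v) h2
        simp only [smul_smul, inv_mul_cancel₀ ha, one_smul] at h3
        rw [h3, smul_neg, smul_smul, neg_smul]
      exact hone x y hx
    · have hy : y ∈ Submodule.span K ({x} : Set V) := by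
        rw [Submodule.mem_span_singleton]
        refine ⟨-(b⁻¹ * a), ?_⟩
        have h2 : b • y = -(a • x) := by
          rw [eq_neg_iff_add_eq_zero, add_comm]; exact hab
        have h3 := congrArg (fun v => b⁻¹ • v) h2
        simp only [smul_smul, inv_mul_cancel₀ hb, one_smul] at h3
        rw [h3, smul_neg, smul_smul, neg_smul]
      have hxy : ({x, y} : Set V) = insert y {x} := by rw [Set.pair_comm]
      rw [hxy]
      exact hone y x hy
  omega

lemma aux_pair_dep {K V : Type*} [Field K] [AddCommGroup V] [Module K V] {x y : V}
    (h : Module.finrank K (Submodule.span K ({x, y} : Set V)) = 1) :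
    ∃ p : K × K, p ≠ 0 ∧ p.1 • x + p.2 • y = 0 := by
  by_contra hc
  push_neg at hc
  have hLI : LinearIndependent K ![x, y] := by
    rw [LinearIndependent.pair_iff]
    intro s t hst
    by_contra h'
    exact hc (s, t) (by simpa [Prod.ext_iff, not_and_or] using h') hst
  have h2 := finrank_span_eq_card hLI
  rw [Matrix.range_cons_cons_empty] at h2
  simp only [Fintype.card_fin] at h2
  omega

lemma aux_mds_zero {n k : ℕ} {K : Type*} [Field K] {G : Matrix (Fin k) (Fin n) K}
    (hMDS : IsMDS G) (hkn : k ≤ n) {u : Fin n → K} (hu : G *ᵥ u = 0)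
    (s : Finset (Fin n)) (hcard : s.card ≤ k) (hs : ∀ i ∉ s, u i = 0) : u = 0 := by
  obtain ⟨t, hst, -, htc⟩ := Finset.exists_subsuperset_card_eq s.subset_univ hcard
    (by simpa using hkn)
  have hLI := hMDS t htc
  rw [Fintype.linearIndependent_iff] at hLI
  have hsum : ∑ j : t, u j • (fun r : Fin k => G r j.1) = 0 := by
    funext r
    rw [Finset.sum_apply]
    simp only [Pi.smul_apply, smul_eq_mul, Pi.zero_apply]
    have h1 : ∑ j : t, u j * G r j = ∑ j ∈ t, u j * G r j :=
      t.sum_coe_sort (fun j => u j * G r j)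
    rw [h1]
    rw [Finset.sum_subset t.subset_univ (fun x _ hx => by rw [hs x (fun hxs => hx (hst hxs))]; ring)]
    have h4 := congrFun hu r
    simp only [Matrix.mulVec, dotProduct, Pi.zero_apply] at h4
    rw [← h4]
    exact Finset.sum_congr rfl (fun j _ => mul_comm _ _)
  have hzero := hLI (fun j => u j) hsum
  funext i
  by_cases hit : i ∈ t
  · exact hzero ⟨i, hit⟩
  · exact hs i (fun h => hit (hst h))

/-- The "slope" of a nonzero vector in `K²`, identifying proportional vectors. -/
def auxSlope {K : Type*} [Field K] [DecidableEq K] (q : K × K) : Option K :=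
  if q.1 = 0 then none else some (q.2 / q.1)

lemma aux_slope_prop {K : Type*} [Field K] [DecidableEq K] {q q' : K × K}
    (hq : q ≠ 0) (hq' : q' ≠ 0) (h : auxSlope q = auxSlope q') :
    ∃ t : K, t ≠ 0 ∧ q' = t • q := by
  by_cases h1 : q.1 = 0
  · have h2 : q.2 ≠ 0 := fun hz => hq (Prod.ext_iff.mpr ⟨h1, hz⟩)
    have h1' : q'.1 = 0 := by
      by_contra hcon
      simp [auxSlope, h1, hcon] at h
    have h2' : q'.2 ≠ 0 := fun hz => hq' (Prod.ext_iff.mpr ⟨h1', hz⟩)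
    refine ⟨q'.2 / q.2, div_ne_zero h2' h2, Prod.ext_iff.mpr ⟨?_, ?_⟩⟩
    · rw [Prod.smul_fst, smul_eq_mul, h1, h1', mul_zero]
    · rw [Prod.smul_snd, smul_eq_mul, div_mul_cancel₀ _ h2]
  · have h1' : q'.1 ≠ 0 := by
      intro hz
      simp [auxSlope, h1, hz] at h
    have heq2 : q.2 / q.1 = q'.2 / q'.1 := by
      simp only [auxSlope, if_neg h1, if_neg h1', Option.some.injEq] at h
      exact h
    refine ⟨q'.1 / q.1, div_ne_zero h1' h1, Prod.ext_iff.mpr ⟨?_, ?_⟩⟩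
    · rw [Prod.smul_fst, smul_eq_mul, div_mul_cancel₀ _ h1]
    · rw [Prod.smul_snd, smul_eq_mul]
      field_simp at heq2 ⊢
      linear_combination -heq2

/-- an `(n,k)` piggybacking code over `F_q` with `t = 2` substripes
(MDS base code of dimension `k`, `2 ≤ k`, `k+2 ≤ n`) admitting a perfect-bandwidth
(`b = k+1`) linear repair scheme for some node `i*` from a repair set `S` of size
`k+1` forces `q ≥ k+1`. -/
theorem perfect_bandwidth_field_size {n k : ℕ} (K : Type*) [Field K] [Fintype K]
    (hk : 2 ≤ k) (hn : k + 2 ≤ n)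
    (G : Matrix (Fin k) (Fin n) K) (hMDS : IsMDS G)
    (P : Matrix (Fin k) (Fin n) K)
    (istar : Fin n) (S : Finset (Fin n)) (hS : S.card = k + 1) (hiS : istar ∉ S)
    (W0 W1 : Matrix (Fin n) (Fin 2) K)
    (hd0 : G *ᵥ (fun r => W0 r 0) + P *ᵥ (fun r => W0 r 1) = 0 ∧
      G *ᵥ (fun r => W0 r 1) = 0)
    (hd1 : G *ᵥ (fun r => W1 r 0) + P *ᵥ (fun r => W1 r 1) = 0 ∧
      G *ᵥ (fun r => W1 r 1) = 0)
    (hsupp : ∀ i : Fin n, i ∉ S → i ≠ istar → W0 i = 0 ∧ W1 i = 0)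
    (hfull : Module.finrank K
      (Submodule.span K ({W0 istar, W1 istar} : Set (Fin 2 → K))) = 2)
    (hdim : ∀ i ∈ S, Module.finrank K
      (Submodule.span K ({W0 i, W1 i} : Set (Fin 2 → K))) = 1) :
    k + 1 ≤ Fintype.card K := by
  classical
  have hkn : k ≤ n := by omega
  have hI : ∀ a b : K, a • W0 istar + b • W1 istar = 0 → a = 0 ∧ b = 0 :=
    aux_pair_indep hfull
  -- Key step 2: a combination of the dual words vanishing on two distinct rows of S is zero.
  have key2 : ∀ a b : K, ∀ i ∈ S, ∀ j ∈ S, i ≠ j →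
      a • W0 i + b • W1 i = 0 → a • W0 j + b • W1 j = 0 → a = 0 ∧ b = 0 := by
    intro a b i hi j hj hij hri hrj
    set s2 : Finset (Fin n) := ((insert istar S).erase i).erase j with hs2
    have hji : j ∈ (insert istar S).erase i :=
      Finset.mem_erase.mpr ⟨Ne.symm hij, Finset.mem_insert_of_mem hj⟩
    have hii : i ∈ insert istar S := Finset.mem_insert_of_mem hi
    have hcard2 : s2.card = k := by
      rw [hs2, Finset.card_erase_of_mem hji, Finset.card_erase_of_mem hii,
        Finset.card_insert_of_notMem hiS, hS]
      omega
    have hvan : ∀ r, r ∉ s2 → a • W0 r + b • W1 r = 0 := by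
      intro r hr
      rcases eq_or_ne r i with rfl | hri2
      · exact hri
      rcases eq_or_ne r j with rfl | hrj2
      · exact hrj
      have hrS : r ∉ S ∧ r ≠ istar := by
        by_contra hcon
        rw [not_and_or, not_not, ne_eq, not_not] at hcon
        apply hr
        rw [hs2]
        simp only [Finset.mem_erase, Finset.mem_insert]
        refine ⟨hrj2, hri2, ?_⟩
        rcases hcon with h | h
        · exact Or.inr h
        · exact Or.inl h
      obtain ⟨h0, h1⟩ := hsupp r hrS.1 hrS.2
      rw [h0, h1, smul_zero, smul_zero, add_zero]
    have hGu : G *ᵥ (a • (fun r => W0 r 1) + b • (fun r => W1 r 1)) = 0 := by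
      rw [mulVec_add, mulVec_smul, mulVec_smul, hd0.2, hd1.2, smul_zero, smul_zero, add_zero]
    have hvanu : ∀ r ∉ s2, (a • (fun r => W0 r 1) + b • (fun r => W1 r 1)) r = 0 := by
      intro r hr
      simpa using congrFun (hvan r hr) 1
    have hu : a • (fun r => W0 r 1) + b • (fun r => W1 r 1) = (0 : Fin n → K) :=
      aux_mds_zero hMDS hkn hGu s2 (le_of_eq hcard2) hvanu
    have hGw : G *ᵥ (a • (fun r => W0 r 0) + b • (fun r => W1 r 0)) = 0 := by
      have h1 : G *ᵥ (a • (fun r => W0 r 0) + b • (fun r => W1 r 0))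
          + P *ᵥ (a • (fun r => W0 r 1) + b • (fun r => W1 r 1)) = 0 := by
        rw [mulVec_add, mulVec_add, mulVec_smul, mulVec_smul, mulVec_smul, mulVec_smul]
        linear_combination (norm := module) a • hd0.1 + b • hd1.1
      rw [hu, mulVec_zero, add_zero] at h1
      exact h1
    have hvanw : ∀ r ∉ s2, (a • (fun r => W0 r 0) + b • (fun r => W1 r 0)) r = 0 := by
      intro r hr
      simpa using congrFun (hvan r hr) 0
    have hw : a • (fun r => W0 r 0) + b • (fun r => W1 r 0) = (0 : Fin n → K) :=
      aux_mds_zero hMDS hkn hGw s2 (le_of_eq hcard2) hvanw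
    apply hI a b
    refine funext (Fin.forall_fin_two.mpr ⟨?_, ?_⟩)
    · simpa using congrFun hw istar
    · simpa using congrFun hu istar
  -- Key step C: the second columns are linearly independent.
  have keyC : ∀ a b : K,
      a • (fun r => W0 r 1) + b • (fun r => W1 r 1) = (0 : Fin n → K) → a = 0 ∧ b = 0 := by
    intro a b hab0
    by_contra hcon
    have hZ2 : ∀ i ∈ S, ∀ j ∈ S, a • W0 i + b • W1 i = 0 → a • W0 j + b • W1 j = 0 → i = j := by
      intro i hi j hj hzi hzj
      by_contra hne
      exact hcon (key2 a b i hi j hj hne hzi hzj)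
    have hpt : ∀ r, a * W0 r 1 + b * W1 r 1 = 0 := fun r => by simpa using congrFun hab0 r
    have hsecond : ∀ i ∈ S, ¬(a • W0 i + b • W1 i = 0) → W0 i 1 = 0 ∧ W1 i 1 = 0 := by
      intro i hi hnz
      obtain ⟨p, hp0, hpr⟩ := aux_pair_dep (hdim i hi)
      have e1 := hpt i
      have e2 : p.1 * W0 i 1 + p.2 * W1 i 1 = 0 := by simpa using congrFun hpr 1
      have hD : a * p.2 - b * p.1 ≠ 0 := by
        intro hD0
        apply hnz
        have hp : p.1 ≠ 0 ∨ p.2 ≠ 0 := by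
          by_contra hpp
          push_neg at hpp
          exact hp0 (Prod.ext_iff.mpr ⟨hpp.1, hpp.2⟩)
        rcases hp with h1 | h2
        · have hb' : a / p.1 * p.2 = b := by
            field_simp
            linear_combination hD0
          calc a • W0 i + b • W1 i = (a / p.1) • (p.1 • W0 i + p.2 • W1 i) := by
                rw [smul_add, smul_smul, smul_smul, div_mul_cancel₀ a h1, hb']
            _ = 0 := by rw [hpr, smul_zero]
        · have ha' : b / p.2 * p.1 = a := by
            field_simp
            linear_combination -hD0
          calc a • W0 i + b • W1 i = (b / p.2) • (p.1 • W0 i + p.2 • W1 i) := by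
                rw [smul_add, smul_smul, smul_smul, div_mul_cancel₀ b h2, ha']
            _ = 0 := by rw [hpr, smul_zero]
      constructor
      · have hx : (a * p.2 - b * p.1) * W0 i 1 = 0 := by linear_combination p.2 * e1 - b * e2
        exact (mul_eq_zero.mp hx).resolve_left hD
      · have hy : (a * p.2 - b * p.1) * W1 i 1 = 0 := by linear_combination a * e2 - p.1 * e1
        exact (mul_eq_zero.mp hy).resolve_left hD
    obtain ⟨i0, hP⟩ : ∃ i0 : Fin n, ∀ r ∈ S, r ≠ i0 → ¬(a • W0 r + b • W1 r = 0) := by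
      by_cases hZ : ∃ i ∈ S, a • W0 i + b • W1 i = 0
      · obtain ⟨i0, hi0, hzi0⟩ := hZ
        exact ⟨i0, fun r hr hne hzr => hne (hZ2 r hr i0 hi0 hzr hzi0)⟩
      · push_neg at hZ
        exact ⟨istar, fun r hr _ => hZ r hr⟩
    have hvan0 : ∀ r, r ∉ ({istar, i0} : Finset (Fin n)) → W0 r 1 = 0 ∧ W1 r 1 = 0 := by
      intro r hr
      simp only [Finset.mem_insert, Finset.mem_singleton, not_or] at hr
      by_cases hrS : r ∈ S
      · exact hsecond r hrS (hP r hrS hr.2)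
      · obtain ⟨h0, h1⟩ := hsupp r hrS hr.1
        exact ⟨by rw [h0]; rfl, by rw [h1]; rfl⟩
    have hcard0 : ({istar, i0} : Finset (Fin n)).card ≤ k :=
      le_trans (Finset.card_insert_le _ _) (by rw [Finset.card_singleton]; omega)
    have hu0z : (fun r => W0 r 1) = (0 : Fin n → K) :=
      aux_mds_zero hMDS hkn hd0.2 _ hcard0 (fun r hr => (hvan0 r hr).1)
    have hu1z : (fun r => W1 r 1) = (0 : Fin n → K) :=
      aux_mds_zero hMDS hkn hd1.2 _ hcard0 (fun r hr => (hvan0 r hr).2)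
    have h0 : W0 istar 1 = 0 := congrFun hu0z istar
    have h1 : W1 istar 1 = 0 := congrFun hu1z istar
    by_cases hx0 : W0 istar 0 = 0
    · have hW0z : W0 istar = 0 := funext (Fin.forall_fin_two.mpr ⟨hx0, h0⟩)
      have := hI 1 0 (by rw [hW0z, smul_zero, zero_smul, add_zero])
      exact one_ne_zero this.1
    · have hcomb : (W1 istar 0) • W0 istar + (-(W0 istar 0)) • W1 istar = 0 := by
        refine funext (Fin.forall_fin_two.mpr ⟨?_, ?_⟩)
        · simp only [Pi.add_apply, Pi.smul_apply, smul_eq_mul, Pi.zero_apply]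
          ring
        · simp only [Pi.add_apply, Pi.smul_apply, smul_eq_mul, Pi.zero_apply, h0, h1]
          ring
      have := hI (W1 istar 0) (-(W0 istar 0)) hcomb
      exact hx0 (neg_eq_zero.mp this.2)
  -- choose relations on S
  have hrel : ∀ i ∈ S, ∃ p : K × K, p ≠ 0 ∧ p.1 • W0 i + p.2 • W1 i = 0 :=
    fun i hi => aux_pair_dep (hdim i hi)
  choose! p hp0 hpr using hrel
  -- the main exclusion at istar
  have hmain : ∀ i ∈ S, (p i).1 * W0 istar 1 + (p i).2 * W1 istar 1 ≠ 0 := by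
    intro i hi hzero
    have hGu : G *ᵥ ((p i).1 • (fun r => W0 r 1) + (p i).2 • (fun r => W1 r 1)) = 0 := by
      rw [mulVec_add, mulVec_smul, mulVec_smul, hd0.2, hd1.2, smul_zero, smul_zero, add_zero]
    have hvan : ∀ r, r ∉ S.erase i →
        ((p i).1 • (fun r => W0 r 1) + (p i).2 • (fun r => W1 r 1)) r = 0 := by
      intro r hr
      simp only [Pi.add_apply, Pi.smul_apply, smul_eq_mul]
      rcases eq_or_ne r i with rfl | hne
      · simpa using congrFun (hpr r hi) 1
      · have hrS : r ∉ S := by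
          by_contra h
          exact hr (Finset.mem_erase.mpr ⟨hne, h⟩)
        rcases eq_or_ne r istar with rfl | hni
        · exact hzero
        · obtain ⟨h0, h1⟩ := hsupp r hrS hni
          rw [h0, h1]
          simp
    have hcard : (S.erase i).card ≤ k := by
      rw [Finset.card_erase_of_mem hi, hS]
      omega
    have hres := keyC (p i).1 (p i).2 (aux_mds_zero hMDS hkn hGu _ hcard hvan)
    exact hp0 i hi (Prod.ext_iff.mpr ⟨hres.1, hres.2⟩)
  have hS0 : S.Nonempty := Finset.card_pos.mp (by rw [hS]; omega)
  have hv0 : ((W1 istar 1, -(W0 istar 1)) : K × K) ≠ 0 := by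
    intro h
    rw [Prod.ext_iff] at h
    obtain ⟨i0, hi0⟩ := hS0
    apply hmain i0 hi0
    have e1 : W1 istar 1 = 0 := h.1
    have e0 : W0 istar 1 = 0 := neg_eq_zero.mp h.2
    rw [e0, e1, mul_zero, mul_zero, add_zero]
  have hstar_ne : ∀ i ∈ S, auxSlope (p i) ≠ auxSlope ((W1 istar 1, -(W0 istar 1)) : K × K) := by
    intro i hi heq
    obtain ⟨t, ht0, htq⟩ := aux_slope_prop (hp0 i hi) hv0 heq
    apply hmain i hi
    have ht1 : W1 istar 1 = t * (p i).1 := by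
      have := congrArg Prod.fst htq
      simpa using this
    have ht2 : -(W0 istar 1) = t * (p i).2 := by
      have := congrArg Prod.snd htq
      simpa using this
    have hcomb : t * ((p i).1 * W0 istar 1 + (p i).2 * W1 istar 1) = 0 := by
      have hc2 : t * ((p i).1 * W0 istar 1 + (p i).2 * W1 istar 1)
          = (t * (p i).1) * W0 istar 1 + (t * (p i).2) * W1 istar 1 := by ring
      rw [hc2, ← ht1, ← ht2]
      ring
    rcases mul_eq_zero.mp hcomb with h | h
    · exact absurd h ht0
    · exact h
  have hinj : Set.InjOn (fun i => auxSlope (p i)) S := by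
    intro i hi j hj heq
    by_contra hne
    obtain ⟨t, ht0, htq⟩ := aux_slope_prop (hp0 i hi) (hp0 j hj) heq
    have hrj : (p i).1 • W0 j + (p i).2 • W1 j = 0 := by
      have h := hpr j hj
      rw [htq, Prod.smul_fst, Prod.smul_snd, smul_eq_mul, smul_eq_mul] at h
      have h' : t • ((p i).1 • W0 j + (p i).2 • W1 j) = 0 := by
        rw [smul_add, smul_smul, smul_smul]
        exact h
      exact (smul_eq_zero.mp h').resolve_left ht0
    have hres := key2 (p i).1 (p i).2 i hi j hj hne (hpr i hi) hrj
    exact absurd (Prod.ext_iff.mpr ⟨hres.1, hres.2⟩) (hp0 i hi)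
  have himg : (S.image (fun i => auxSlope (p i))).card = k + 1 := by
    rw [Finset.card_image_of_injOn hinj, hS]
  have hnotmem : auxSlope ((W1 istar 1, -(W0 istar 1)) : K × K)
      ∉ S.image (fun i => auxSlope (p i)) := by
    intro h
    obtain ⟨i, hi, hei⟩ := Finset.mem_image.mp h
    exact hstar_ne i hi hei
  have hcard2 : (insert (auxSlope ((W1 istar 1, -(W0 istar 1)) : K × K))
      (S.image (fun i => auxSlope (p i)))).card = k + 2 := by
    rw [Finset.card_insert_of_notMem hnotmem, himg]
  have hle : k + 2 ≤ Fintype.card (Option K) := by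
    rw [← hcard2]
    exact Finset.card_le_univ _
  rw [Fintype.card_option] at hle
  omega
end

section
/- Let C be a perfect-bandwidth (n,k) piggybacking code over F_q with t substripes, 2 ≤ t, k ≥ 2. Any repair scheme {W^{(0)},…,W^{(t−1)}} for a failed node i* from repair set S of size k+t−1 is equivalent (via invertible linear combinations of the repair matrices) to a scheme in standard form: there is a partition S = T ∪ {r_0,…,r_{t−1}} with |T| = k−1 such that each W^{(j)} is nonzero only on rows T ∪ {r_j, i*}, and the last column of each W^{(j)} has exactly k+1 nonzero entries. -/
open Matrix

/-- Membership in the dual of the piggybacking code (with base generator `G` and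
piggybacking matrices `P i j`, used for `i < j`), via the column characterization. -/
def PiggyDual {n t k : ℕ} {K : Type*} [Field K] [Fintype K]
    (G : Matrix (Fin k) (Fin n) K) (P : Fin t → Fin t → Matrix (Fin k) (Fin n) K)
    (W : Matrix (Fin n) (Fin t) K) : Prop :=
  ∀ i : Fin t,
    G *ᵥ (fun r => W r i) + ∑ j ∈ Finset.Ioi i, (P i j) *ᵥ (fun r => W r j) = 0

/-- any perfect-bandwidth repair scheme for a piggybacking code with
`t+1 ≥ 2` substripes is equivalent, via an invertible linear combination `A` of the
repair matrices, to a scheme in standard form: `S` is partitioned into a set `T` of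
`k-1` rows shared by all repair matrices together with rows `r_0, …, r_t`, where the
`j`-th new repair matrix is supported on `T ∪ {r_j, i*}`, and the last column of each
new repair matrix has exactly `k+1` nonzero entries. -/
theorem standard_form {n t k : ℕ} (K : Type*) [Field K] [Fintype K] [DecidableEq K]
    (hk : 2 ≤ k) (ht : 1 ≤ t)
    (G : Matrix (Fin k) (Fin n) K) (hMDS : IsMDS G)
    (P : Fin (t + 1) → Fin (t + 1) → Matrix (Fin k) (Fin n) K)
    (istar : Fin n) (S : Finset (Fin n)) (hiS : istar ∉ S) (hS : S.card = k + t)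
    (W : Fin (t + 1) → Matrix (Fin n) (Fin (t + 1)) K)
    (hdual : ∀ j, PiggyDual G P (W j))
    (hsupp : ∀ (j) (i : Fin n), i ∉ S → i ≠ istar → W j i = 0)
    (hfull : Module.finrank K
      (Submodule.span K (Set.range fun j => W j istar)) = t + 1)
    (hdim : ∀ i ∈ S,
      Module.finrank K (Submodule.span K (Set.range fun j => W j i)) = 1) :
    ∃ A : Matrix (Fin (t + 1)) (Fin (t + 1)) K, IsUnit A.det ∧
      ∃ (T : Finset (Fin n)) (r : Fin (t + 1) → Fin n),
        T ⊆ S ∧ T.card = k - 1 ∧ Function.Injective r ∧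
        (∀ j, r j ∈ S ∧ r j ∉ T) ∧
        (∀ i ∈ S, i ∈ T ∨ ∃ j, r j = i) ∧
        (∀ (j) (i : Fin n), i ∉ T → i ≠ r j → i ≠ istar →
          (∑ ℓ, A j ℓ • W ℓ) i = 0) ∧
        (∀ j, (Finset.univ.filter
          fun i : Fin n => (∑ ℓ, A j ℓ • W ℓ) i (Fin.last t) ≠ 0).card = k + 1) := by
  classical
  have hn : k + t ≤ n := by
    have h := S.card_le_univ
    rwa [hS, Fintype.card_fin] at h
  -- L0 : nonzero dual codewords of the MDS base code have weight ≥ k+1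
  have L0 : ∀ x : Fin n → K, x ≠ 0 → G *ᵥ x = 0 →
      k + 1 ≤ (Finset.univ.filter fun i => x i ≠ 0).card := by
    intro x hx hd
    by_contra hcon
    push_neg at hcon
    have hle : (Finset.univ.filter fun i => x i ≠ 0).card ≤ k := by omega
    obtain ⟨s, hsub, -, hcard⟩ := Finset.exists_subsuperset_card_eq
      (Finset.subset_univ (Finset.univ.filter fun i => x i ≠ 0)) hle
      (by rw [Finset.card_univ, Fintype.card_fin]; omega)
    have hxs : ∀ i, i ∉ s → x i = 0 := by
      intro i hi
      by_contra hxi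
      exact hi (hsub (Finset.mem_filter.mpr ⟨Finset.mem_univ _, hxi⟩))
    have hind := hMDS s hcard
    have hzero : ∑ j : s, x j.1 • (fun r : Fin k => G r j.1) = 0 := by
      funext rr
      have hdr := congrFun hd rr
      simp only [mulVec, dotProduct, Pi.zero_apply] at hdr
      calc (∑ j : s, x j.1 • fun r : Fin k => G r j.1) rr
          = ∑ j : s, x j.1 * G rr j.1 := by
            rw [Finset.sum_apply]
            exact Finset.sum_congr rfl fun j _ => rfl
        _ = ∑ i ∈ s, x i * G rr i := Finset.sum_coe_sort s (fun i => x i * G rr i)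
        _ = ∑ i, x i * G rr i :=
            Finset.sum_subset (Finset.subset_univ s)
              (fun i _ hi => by rw [hxs i hi, zero_mul])
        _ = 0 := by rw [← hdr]; exact Finset.sum_congr rfl fun i _ => mul_comm _ _
    have hall := Fintype.linearIndependent_iff.mp hind (fun j => x j.1) hzero
    apply hx
    funext i
    by_cases hi : i ∈ s
    · exact hall ⟨i, hi⟩
    · exact hxs i hi
  -- independence of the rows at istar
  have hindep : LinearIndependent K (fun j => W j istar) := by
    rw [linearIndependent_iff_card_eq_finrank_span]
    simp [Set.finrank, hfull]
  -- rank-one decomposition of rows in S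
  have hvc0 : ∀ i : Fin n, ∃ p : (Fin (t+1) → K) × (Fin (t+1) → K),
      i ∈ S → ∀ j, W j i = p.2 j • p.1 := by
    intro i
    by_cases hi : i ∈ S
    · have h1 := hdim i hi
      rw [finrank_eq_one_iff'] at h1
      obtain ⟨v0, hv0, hall⟩ := h1
      have hmem : ∀ j, W j i ∈ Submodule.span K (Set.range fun j => W j i) :=
        fun j => Submodule.subset_span (Set.mem_range_self j)
      choose cf hcf using fun j => hall ⟨W j i, hmem j⟩
      refine ⟨((v0 : Fin (t+1) → K), cf), fun _ j => ?_⟩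
      have h2 := congrArg Subtype.val (hcf j)
      simpa using h2.symm
    · exact ⟨(0, 0), fun h => absurd h hi⟩
  choose vc hvc using hvc0
  set v : Fin n → Fin (t+1) → K := fun i => (vc i).1 with hvdef
  set co : Fin n → Fin (t+1) → K := fun i => (vc i).2 with hcodef
  have hWrow : ∀ (i : Fin n), i ∈ S → ∀ j, W j i = co i j • v i := fun i hi j => hvc i hi j
  -- row formula for linear combinations
  have hrow : ∀ (a : Fin (t+1) → K) (i : Fin n), i ∈ S →
      (∑ ℓ, a ℓ • W ℓ) i = (∑ ℓ, a ℓ * co i ℓ) • v i := by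
    intro a i hi
    have h1 : (∑ ℓ, a ℓ • W ℓ) i = ∑ ℓ, a ℓ • W ℓ i := by
      refine (Finset.sum_apply (M := fun _ => Fin (t+1) → K) i Finset.univ fun ℓ => a ℓ • W ℓ).trans ?_
      exact Finset.sum_congr rfl fun ℓ _ => rfl
    rw [h1]
    calc ∑ ℓ, a ℓ • W ℓ i = ∑ ℓ, (a ℓ * co i ℓ) • v i := by
          refine Finset.sum_congr rfl fun ℓ _ => ?_
          rw [hWrow i hi ℓ, smul_smul]
      _ = (∑ ℓ, a ℓ * co i ℓ) • v i := by rw [Finset.sum_smul]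
  have hrow0 : ∀ (a : Fin (t+1) → K) (i : Fin n), i ∉ S → i ≠ istar →
      (∑ ℓ, a ℓ • W ℓ) i = 0 := by
    intro a i hiS hii
    have h1 : (∑ ℓ, a ℓ • W ℓ) i = ∑ ℓ, a ℓ • W ℓ i := by
      refine (Finset.sum_apply (M := fun _ => Fin (t+1) → K) i Finset.univ fun ℓ => a ℓ • W ℓ).trans ?_
      exact Finset.sum_congr rfl fun ℓ _ => rfl
    rw [h1]
    refine Finset.sum_eq_zero fun ℓ _ => ?_
    rw [hsupp ℓ i hiS hii, smul_zero]
  -- closure of PiggyDual under linear combination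
  have hPD : ∀ a : Fin (t+1) → K, PiggyDual G P (∑ ℓ, a ℓ • W ℓ) := by
    intro a i
    have key : ∀ (M : Matrix (Fin k) (Fin n) K) (p : Fin (t+1)),
        (M *ᵥ fun rr => (∑ ℓ, a ℓ • W ℓ) rr p) = ∑ ℓ, a ℓ • (M *ᵥ fun rr => W ℓ rr p) := by
      intro M p
      have h2 : (fun rr => (∑ ℓ, a ℓ • W ℓ) rr p) = ∑ ℓ, a ℓ • (fun rr => W ℓ rr p) := by
        funext rr
        simp only [Matrix.sum_apply, Finset.sum_apply, Pi.smul_apply, Matrix.smul_apply, smul_eq_mul]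
      rw [h2]
      simp only [← Matrix.mulVecLin_apply, map_sum, _root_.map_smul]
    rw [key]
    have h3 : ∀ j ∈ Finset.Ioi i, (P i j *ᵥ fun rr => (∑ ℓ, a ℓ • W ℓ) rr j)
        = ∑ ℓ, a ℓ • (P i j *ᵥ fun rr => W ℓ rr j) := fun j _ => key (P i j) j
    rw [Finset.sum_congr rfl h3, Finset.sum_comm, ← Finset.sum_add_distrib]
    calc ∑ ℓ, (a ℓ • (G *ᵥ fun rr => W ℓ rr i)
            + ∑ j ∈ Finset.Ioi i, a ℓ • (P i j *ᵥ fun rr => W ℓ rr j))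
        = ∑ ℓ, a ℓ • ((G *ᵥ fun rr => W ℓ rr i)
            + ∑ j ∈ Finset.Ioi i, (P i j *ᵥ fun rr => W ℓ rr j)) := by
          refine Finset.sum_congr rfl fun ℓ _ => ?_
          rw [smul_add, Finset.smul_sum]
      _ = 0 := by
          refine Finset.sum_eq_zero fun ℓ _ => ?_
          rw [hdual ℓ i, smul_zero]
  -- L1 : every nonzero functional is nonvanishing on ≥ k of the directions co i
  have L1 : ∀ a : Fin (t+1) → K, a ≠ 0 →
      k ≤ (S.filter fun i => ∑ ℓ, a ℓ * co i ℓ ≠ 0).card := by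
    intro a ha
    have hrownz : (∑ ℓ, a ℓ • W ℓ) istar ≠ 0 := by
      intro h0
      apply ha
      have h1 : ∑ ℓ, a ℓ • W ℓ istar = 0 := by
        rw [← h0]; refine Eq.trans ?_ (Finset.sum_apply (M := fun _ => Fin (t+1) → K) istar Finset.univ fun ℓ => a ℓ • W ℓ).symm
        exact Finset.sum_congr rfl fun ℓ _ => rfl
      have h2 := Fintype.linearIndependent_iff.mp hindep a h1
      funext ℓ; exact h2 ℓ
    obtain ⟨p0, hp0⟩ : ∃ p, (∑ ℓ, a ℓ • W ℓ) istar p ≠ 0 := by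
      by_contra h; push_neg at h; exact hrownz (funext h)
    set Q := Finset.univ.filter
      (fun p : Fin (t+1) => ∃ i, (∑ ℓ, a ℓ • W ℓ) i p ≠ 0) with hQ
    have hQne : Q.Nonempty := ⟨p0, Finset.mem_filter.mpr ⟨Finset.mem_univ _, ⟨istar, hp0⟩⟩⟩
    set pm := Q.max' hQne with hpm
    obtain ⟨iw, hiw⟩ := (Finset.mem_filter.mp (Q.max'_mem hQne)).2
    have hcolzero : ∀ q, pm < q → ∀ i, (∑ ℓ, a ℓ • W ℓ) i q = 0 := by
      intro q hq i
      by_contra hne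
      have hqQ : q ∈ Q := Finset.mem_filter.mpr ⟨Finset.mem_univ _, ⟨i, hne⟩⟩
      exact absurd (Q.le_max' q hqQ) (not_le.mpr hq)
    have hdualpm := hPD a pm
    have hsum0 : ∑ j ∈ Finset.Ioi pm, (P pm j) *ᵥ (fun rr => (∑ ℓ, a ℓ • W ℓ) rr j) = 0 := by
      refine Finset.sum_eq_zero fun j hj => ?_
      have hcz : (fun rr => (∑ ℓ, a ℓ • W ℓ) rr j) = 0 :=
        funext fun rr => hcolzero j (Finset.mem_Ioi.mp hj) rr
      rw [hcz, Matrix.mulVec_zero]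
    rw [hsum0, add_zero] at hdualpm
    have hx : (fun i => (∑ ℓ, a ℓ • W ℓ) i pm) ≠ 0 := by
      intro h; exact hiw (congrFun h iw)
    have hwt := L0 _ hx hdualpm
    have hsub : (Finset.univ.filter fun i => (∑ ℓ, a ℓ • W ℓ) i pm ≠ 0)
        ⊆ insert istar (S.filter fun i => ∑ ℓ, a ℓ * co i ℓ ≠ 0) := by
      intro i hi
      have hine := (Finset.mem_filter.mp hi).2
      rcases eq_or_ne i istar with h | h
      · exact h ▸ Finset.mem_insert_self _ _
      · have hiS' : i ∈ S := by
          by_contra hnS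
          exact hine (by rw [hrow0 a i hnS h]; rfl)
        refine Finset.mem_insert_of_mem (Finset.mem_filter.mpr ⟨hiS', ?_⟩)
        intro hdot0
        exact hine (by rw [hrow a i hiS', hdot0, zero_smul]; rfl)
    have hc1 := Finset.card_le_card hsub
    have hc2 := Finset.card_insert_le istar (S.filter fun i => ∑ ℓ, a ℓ * co i ℓ ≠ 0)
    omega
  -- Ioi of the last index is empty
  have hIoi : Finset.Ioi (Fin.last t) = ∅ := by
    ext q
    simp only [Finset.mem_Ioi, Finset.notMem_empty, iff_false]
    exact not_lt.mpr (Fin.le_last q)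
  -- some row of some W has nonzero last entry at istar
  obtain ⟨ℓ0, hℓ0⟩ : ∃ ℓ, W ℓ istar (Fin.last t) ≠ 0 := by
    by_contra h; push_neg at h
    have htop : Submodule.span K (Set.range fun j => W j istar) = ⊤ := by
      apply Submodule.eq_top_of_finrank_eq
      rw [hfull, Module.finrank_fin_fun]
    have hmem : (Pi.single (Fin.last t) 1 : Fin (t+1) → K)
        ∈ Submodule.span K (Set.range fun j => W j istar) := by
      rw [htop]; exact Submodule.mem_top
    rw [Submodule.mem_span_range_iff_exists_fun] at hmem
    obtain ⟨g, hg⟩ := hmem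
    have h1 := congrFun hg (Fin.last t)
    rw [Finset.sum_apply] at h1
    simp only [Pi.smul_apply, smul_eq_mul, Pi.single_eq_same] at h1
    have h2 : ∑ j, g j * W j istar (Fin.last t) = 0 :=
      Finset.sum_eq_zero fun j _ => by rw [h j, mul_zero]
    rw [h2] at h1
    exact one_ne_zero h1.symm
  -- find i0 ∈ S with v i0 last ≠ 0
  obtain ⟨i0, hi0S, hvi0⟩ : ∃ i0, i0 ∈ S ∧ v i0 (Fin.last t) ≠ 0 := by
    by_contra hcon
    push_neg at hcon
    have hgd : G *ᵥ (fun rr => W ℓ0 rr (Fin.last t)) = 0 := by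
      have h1 := hdual ℓ0 (Fin.last t)
      rwa [hIoi, Finset.sum_empty, add_zero] at h1
    have hxne : (fun i => W ℓ0 i (Fin.last t)) ≠ 0 := fun h => hℓ0 (congrFun h istar)
    have hwt := L0 _ hxne hgd
    have hsub : (Finset.univ.filter fun i => W ℓ0 i (Fin.last t) ≠ 0) ⊆ {istar} := by
      intro i hi
      have hine := (Finset.mem_filter.mp hi).2
      rcases eq_or_ne i istar with h | h
      · simp [h]
      · exfalso
        have hiS' : i ∈ S := by
          by_contra hnS
          exact hine (by rw [hsupp ℓ0 i hnS h]; rfl)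
        apply hine
        rw [hWrow i hiS' ℓ0]
        simp [hcon i hiS']
    have hc1 := Finset.card_le_card hsub
    rw [Finset.card_singleton] at hc1
    omega
  -- choose R ⊆ S \ {i0} of card t+1
  obtain ⟨R, hRsub, hRcard⟩ : ∃ R ⊆ S.erase i0, R.card = t + 1 := by
    apply Finset.exists_subset_card_eq
    rw [Finset.card_erase_of_mem hi0S, hS]; omega
  have hRS : R ⊆ S := hRsub.trans (S.erase_subset i0)
  have hi0R : i0 ∉ R := fun h => (Finset.notMem_erase i0 S) (hRsub h)
  let e : R ≃ Fin (t+1) := R.equivFinOfCardEq hRcard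
  set r : Fin (t+1) → Fin n := fun j => ((e.symm j : R) : Fin n) with hrdef
  have hrmem : ∀ j, r j ∈ R := fun j => (e.symm j).2
  have hrinj : Function.Injective r := fun a b hab => e.symm.injective (Subtype.ext hab)
  have hrsurj : ∀ i ∈ R, ∃ j, r j = i := by
    intro i hi
    exact ⟨e ⟨i, hi⟩, by simp [hrdef]⟩
  -- the matrix C of the directions and its inverse
  set C : Matrix (Fin (t+1)) (Fin (t+1)) K := Matrix.of (fun p j => co (r j) p) with hCdef
  have hdet : IsUnit C.det := by
    rw [isUnit_iff_ne_zero]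
    intro hdet0
    have hdet0' : Cᵀ.det = 0 := by rw [Matrix.det_transpose]; exact hdet0
    obtain ⟨a, hane, ha⟩ := (Matrix.exists_mulVec_eq_zero_iff).mpr hdet0'
    have hz : ∀ j, ∑ ℓ, a ℓ * co (r j) ℓ = 0 := by
      intro j
      have h1 : ∑ ℓ, a ℓ * co (r j) ℓ = (Cᵀ *ᵥ a) j := by
        simp only [Matrix.mulVec, dotProduct, Matrix.transpose_apply, hCdef, Matrix.of_apply]
        exact Finset.sum_congr rfl fun ℓ _ => mul_comm _ _
      rw [h1, ha]; rfl
    have hsub2 : (S.filter fun i => ∑ ℓ, a ℓ * co i ℓ ≠ 0) ⊆ S \ R := by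
      intro i hi
      rw [Finset.mem_sdiff]
      refine ⟨(Finset.mem_filter.mp hi).1, fun hiR => ?_⟩
      obtain ⟨j, hj⟩ := hrsurj i hiR
      exact (Finset.mem_filter.mp hi).2 (hj ▸ hz j)
    have hc1 := Finset.card_le_card hsub2
    have hc2 : (S \ R).card = k + t - (t + 1) := by rw [Finset.card_sdiff_of_subset hRS, hS, hRcard]
    have hk' := L1 a hane
    omega
  have hAC := Matrix.nonsing_inv_mul C hdet
  have hdot : ∀ j j', (∑ ℓ, C⁻¹ j ℓ * co (r j') ℓ) = if j = j' then (1:K) else 0 := by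
    intro j j'
    have h1 := congrFun (congrFun hAC j) j'
    rw [Matrix.mul_apply] at h1
    simp only [hCdef, Matrix.of_apply] at h1
    rw [h1, Matrix.one_apply]
  have hTcard : (S \ R).card = k - 1 := by
    rw [Finset.card_sdiff_of_subset hRS, hS, hRcard]; omega
  -- nonvanishing of each row functional at i0
  have hAi0 : ∀ j, (∑ ℓ, C⁻¹ j ℓ * co i0 ℓ) ≠ 0 := by
    intro j h0
    have hane : (C⁻¹ j) ≠ 0 := by
      intro h
      have h1 := hdot j j
      rw [if_pos rfl] at h1
      refine one_ne_zero (α := K) ?_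
      rw [← h1]
      refine Finset.sum_eq_zero fun ℓ _ => ?_
      rw [show C⁻¹ j ℓ = 0 from congrFun h ℓ, zero_mul]
    have hk' := L1 (C⁻¹ j) hane
    have hsub3 : (S.filter fun i => ∑ ℓ, C⁻¹ j ℓ * co i ℓ ≠ 0)
        ⊆ S \ insert i0 (R.erase (r j)) := by
      intro i hi
      obtain ⟨hiS', hdne⟩ := Finset.mem_filter.mp hi
      rw [Finset.mem_sdiff]
      refine ⟨hiS', fun hmem => ?_⟩
      rcases Finset.mem_insert.mp hmem with h | h
      · exact hdne (h ▸ h0)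
      · obtain ⟨j', hj'⟩ := hrsurj i (Finset.mem_of_mem_erase h)
        have hne : j' ≠ j := by
          intro hjj
          exact (Finset.ne_of_mem_erase h) (by rw [← hj', hjj])
        exact hdne (by rw [← hj', hdot j j', if_neg (Ne.symm hne)])
    have hXsub : insert i0 (R.erase (r j)) ⊆ S :=
      Finset.insert_subset hi0S ((R.erase_subset (r j)).trans hRS)
    have hXcard : (insert i0 (R.erase (r j))).card = t + 1 := by
      rw [Finset.card_insert_of_notMem (fun h => hi0R (Finset.mem_of_mem_erase h)),
        Finset.card_erase_of_mem (hrmem j), hRcard]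
      omega
    have hc1 := Finset.card_le_card hsub3
    have hc2 : (S \ insert i0 (R.erase (r j))).card = k + t - (t + 1) := by
      rw [Finset.card_sdiff_of_subset hXsub, hS, hXcard]
    omega
  -- the support property
  have hsupport : ∀ (j : Fin (t+1)) (i : Fin n), i ∉ S \ R → i ≠ r j → i ≠ istar →
      (∑ ℓ, C⁻¹ j ℓ • W ℓ) i = 0 := by
    intro j i hiT hirj histar
    by_cases hiS' : i ∈ S
    · have hiR : i ∈ R := by
        by_contra h
        exact hiT (Finset.mem_sdiff.mpr ⟨hiS', h⟩)
      obtain ⟨j', hj'⟩ := hrsurj i hiR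
      have hne : j ≠ j' := fun h => hirj ((by rw [h, hj'] : r j = i).symm)
      rw [hrow (C⁻¹ j) i hiS']
      rw [← hj', hdot j j', if_neg hne, zero_smul]
    · exact hrow0 (C⁻¹ j) i hiS' histar
  refine ⟨C⁻¹, Matrix.isUnit_nonsing_inv_det C hdet, S \ R, r,
    Finset.sdiff_subset, hTcard, hrinj, ?_, ?_, hsupport, ?_⟩
  · intro j
    exact ⟨hRS (hrmem j), fun h => (Finset.mem_sdiff.mp h).2 (hrmem j)⟩
  · intro i hi
    by_cases hiR : i ∈ R
    · exact Or.inr (hrsurj i hiR)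
    · exact Or.inl (Finset.mem_sdiff.mpr ⟨hi, hiR⟩)
  · intro j
    have hgd : G *ᵥ (fun i => (∑ ℓ, C⁻¹ j ℓ • W ℓ) i (Fin.last t)) = 0 := by
      have h1 := hPD (C⁻¹ j) (Fin.last t)
      rwa [hIoi, Finset.sum_empty, add_zero] at h1
    have hxne : (fun i => (∑ ℓ, C⁻¹ j ℓ • W ℓ) i (Fin.last t)) ≠ 0 := by
      intro h
      have h1 := congrFun h i0
      rw [hrow (C⁻¹ j) i0 hi0S] at h1
      simp only [Pi.smul_apply, smul_eq_mul, Pi.zero_apply] at h1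
      rcases mul_eq_zero.mp h1 with h | h
      · exact hAi0 j h
      · exact hvi0 h
    have hlow := L0 _ hxne hgd
    have hupper : (Finset.univ.filter
        fun i => (∑ ℓ, C⁻¹ j ℓ • W ℓ) i (Fin.last t) ≠ 0)
        ⊆ insert istar (insert (r j) (S \ R)) := by
      intro i hi
      have hine := (Finset.mem_filter.mp hi).2
      by_contra hmem
      simp only [Finset.mem_insert, not_or] at hmem
      obtain ⟨h1, h2, h3⟩ := hmem
      exact hine (by rw [hsupport j i h3 h2 h1]; rfl)
    have hinscard : (insert istar (insert (r j) (S \ R))).card = k + 1 := by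
      rw [Finset.card_insert_of_notMem, Finset.card_insert_of_notMem, hTcard]
      · omega
      · exact fun h => (Finset.mem_sdiff.mp h).2 (hrmem j)
      · intro h
        rcases Finset.mem_insert.mp h with h | h
        · exact hiS (h ▸ hRS (hrmem j))
        · exact hiS ((Finset.mem_sdiff.mp h).1)
    have hc1 := Finset.card_le_card hupper
    omega
end

section
/- For k ≥ 3, no (n,k) piggybacking code over any finite field F_q with t substripes can have two linear repair schemes of bandwidth k+t−1 for two distinct failed nodes i*_W ≠ i*_V whose repair matrices have the same set of k+t nonzero rows. -/
open Matrix

namespace Piggy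

open Module

set_option linter.unusedSectionVars false

variable {n t k : ℕ} {K : Type*} [Field K] [Fintype K] [DecidableEq K]

/-- L1: a nonzero vector in the kernel of an MDS matrix has weight ≥ k+1. -/
lemma mds_ker_weight (hkn : k ≤ n) {G : Matrix (Fin k) (Fin n) K} (hMDS : IsMDS G)
    {z : Fin n → K} (hz : G *ᵥ z = 0) (hz0 : z ≠ 0) :
    k + 1 ≤ (Finset.univ.filter fun i => z i ≠ 0).card := by
  classical
  by_contra hcon
  push_neg at hcon
  have hle : (Finset.univ.filter fun i => z i ≠ 0).card ≤ k := by omega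
  obtain ⟨s, hsub, hcard⟩ := Finset.exists_superset_card_eq hle (by simpa using hkn)
  have hind := hMDS s hcard
  rw [Fintype.linearIndependent_iff] at hind
  have hsum : ∑ j : s, z j.1 • (fun r : Fin k => G r j.1) = 0 := by
    funext r
    rw [Finset.sum_apply]
    simp only [Pi.smul_apply, smul_eq_mul, Pi.zero_apply]
    rw [Finset.sum_coe_sort s (fun j => z j * G r j)]
    have h2 : ∑ j ∈ s, z j * G r j = ∑ j : Fin n, z j * G r j := by
      apply Finset.sum_subset (Finset.subset_univ s)
      intro i _ hi
      have hzi : z i = 0 := by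
        by_contra hzi
        exact hi (hsub (by simp [hzi]))
      simp [hzi]
    rw [h2]
    have := congrFun hz r
    simpa [Matrix.mulVec, dotProduct, mul_comm] using this
  have hall := hind (fun j => z j.1) hsum
  apply hz0
  funext i
  show z i = 0
  by_cases hi : i ∈ s
  · exact hall ⟨i, hi⟩
  · by_contra hzi
    exact hi (hsub (by simp [hzi]))

variable (G : Matrix (Fin k) (Fin n) K) (P : Fin t → Fin t → Matrix (Fin k) (Fin n) K)

/-- The set of piggy-dual matrices is a submodule. -/
def dualSub : Submodule K (Matrix (Fin n) (Fin t) K) where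
  carrier := {M | PiggyDual G P M}
  zero_mem' := by
    intro i
    have h0 : ∀ j : Fin t, (fun r : Fin n => (0 : Matrix (Fin n) (Fin t) K) r j)
        = (0 : Fin n → K) := fun _ => rfl
    rw [h0 i, Matrix.mulVec_zero]
    rw [Finset.sum_congr rfl (fun j _ => by rw [h0 j, Matrix.mulVec_zero])]
    simp
  add_mem' := by
    intro A B hA hB i
    have hA' := hA i
    have hB' := hB i
    have h1 : (fun r : Fin n => (A + B) r i) = (fun r => A r i) + (fun r => B r i) := rfl
    have h2 : ∀ j : Fin t, (fun r : Fin n => (A + B) r j) = (fun r => A r j) + (fun r => B r j) :=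
      fun j => rfl
    calc G *ᵥ (fun r => (A + B) r i) + ∑ j ∈ Finset.Ioi i, P i j *ᵥ (fun r => (A + B) r j)
        = (G *ᵥ (fun r => A r i) + ∑ j ∈ Finset.Ioi i, P i j *ᵥ (fun r => A r j))
          + (G *ᵥ (fun r => B r i) + ∑ j ∈ Finset.Ioi i, P i j *ᵥ (fun r => B r j)) := by
          rw [h1, Matrix.mulVec_add]
          rw [Finset.sum_congr rfl (fun j _ => by rw [h2 j, Matrix.mulVec_add])]
          rw [Finset.sum_add_distrib]
          abel
      _ = 0 := by rw [hA', hB', add_zero]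
  smul_mem' := by
    intro c A hA i
    have hA' := hA i
    have h1 : ∀ j : Fin t, (fun r : Fin n => (c • A) r j) = c • (fun r => A r j) := fun j => rfl
    calc G *ᵥ (fun r => (c • A) r i) + ∑ j ∈ Finset.Ioi i, P i j *ᵥ (fun r => (c • A) r j)
        = c • (G *ᵥ (fun r => A r i) + ∑ j ∈ Finset.Ioi i, P i j *ᵥ (fun r => A r j)) := by
          rw [h1, Matrix.mulVec_smul, smul_add, Finset.smul_sum]
          rw [Finset.sum_congr rfl (fun j _ => by rw [h1 j, Matrix.mulVec_smul])]
      _ = 0 := by rw [hA', smul_zero]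

lemma mem_dualSub {G : Matrix (Fin k) (Fin n) K}
    {P : Fin t → Fin t → Matrix (Fin k) (Fin n) K} {M : Matrix (Fin n) (Fin t) K} :
    M ∈ dualSub G P ↔ PiggyDual G P M := Iff.rfl

open Classical in
/-- Lemma A: a nonzero piggy-dual matrix has at least k+1 nonzero rows. -/
lemma dual_row_weight (hkn : k ≤ n) (hMDS : IsMDS G)
    {M : Matrix (Fin n) (Fin t) K} (hd : PiggyDual G P M) (hM : M ≠ 0) :
    k + 1 ≤ (Finset.univ.filter fun i => M i ≠ 0).card := by
  classical
  have hne : (Finset.univ.filter fun j : Fin t => (fun r => M r j) ≠ (0 : Fin n → K)).Nonempty := by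
    by_contra hcon
    apply hM
    rw [Finset.not_nonempty_iff_eq_empty, Finset.filter_eq_empty_iff] at hcon
    funext r j
    have := hcon (Finset.mem_univ j)
    simp only [not_not] at this
    exact congrFun this r
  set cs := Finset.univ.filter fun j : Fin t => (fun r => M r j) ≠ (0 : Fin n → K) with hcs
  set m := cs.max' hne with hm
  have hmmem : m ∈ cs := cs.max'_mem hne
  have hcolm : (fun r => M r m) ≠ (0 : Fin n → K) := by
    have := Finset.mem_filter.mp hmmem
    exact this.2
  have hker : G *ᵥ (fun r => M r m) = 0 := by
    have h := hd m
    have hz : ∑ j ∈ Finset.Ioi m, P m j *ᵥ (fun r => M r j) = 0 := by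
      apply Finset.sum_eq_zero
      intro j hj
      have hj' : m < j := Finset.mem_Ioi.mp hj
      have hcol : (fun r => M r j) = (0 : Fin n → K) := by
        by_contra hc
        have : j ∈ cs := by simp [hcs, hc]
        exact absurd (cs.le_max' j this) (not_le.mpr hj')
      rw [hcol, Matrix.mulVec_zero]
    rw [hz, add_zero] at h
    exact h
  have hw := mds_ker_weight hkn hMDS hker hcolm
  refine le_trans hw (Finset.card_le_card ?_)
  intro i hi
  simp only [Finset.mem_filter, Finset.mem_univ, true_and] at hi ⊢
  intro h0
  exact hi (congrFun h0 m)

/-- Dimension bound: linear spaces of kernel vectors supported in Y have dim ≤ |Y| - k. -/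
lemma kerG_supp_dim_le {G' : Matrix (Fin k) (Fin n) K} (hkn : k ≤ n) (hMDS : IsMDS G')
    (S : Submodule K (Fin n → K)) (Y : Finset (Fin n))
    (h1 : ∀ z ∈ S, G' *ᵥ z = 0) (h2 : ∀ z ∈ S, ∀ i ∉ Y, z i = 0) :
    finrank K S ≤ Y.card - k := by
  classical
  obtain ⟨Y0, hY0sub, hY0card⟩ := Finset.exists_subset_card_eq (Nat.sub_le Y.card k)
  let F : S →ₗ[K] (Y0 → K) :=
    { toFun := fun z => fun i => z.1 i.1
      map_add' := fun a b => rfl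
      map_smul' := fun c a => rfl }
  have hinj : Function.Injective F := by
    rw [← LinearMap.ker_eq_bot, LinearMap.ker_eq_bot']
    intro z hz
    by_contra hz0
    have hzne : z.1 ≠ 0 := fun h => hz0 (Subtype.ext h)
    have hw := mds_ker_weight hkn hMDS (h1 z.1 z.2) hzne
    have hsub : (Finset.univ.filter fun i => z.1 i ≠ 0) ⊆ Y \ Y0 := by
      intro i hi
      simp only [Finset.mem_filter, Finset.mem_univ, true_and] at hi
      rw [Finset.mem_sdiff]
      constructor
      · by_contra hiY
        exact hi (h2 z.1 z.2 i hiY)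
      · intro hiY0
        exact hi (congrFun hz (⟨i, hiY0⟩ : Y0))
    have hcard : (Y \ Y0).card = Y.card - Y0.card := Finset.card_sdiff_of_subset hY0sub
    have : k + 1 ≤ Y.card - (Y.card - k) := by
      calc k + 1 ≤ (Y \ Y0).card := le_trans hw (Finset.card_le_card hsub)
        _ = Y.card - Y0.card := hcard
        _ = Y.card - (Y.card - k) := by rw [hY0card]
    omega
  calc finrank K S ≤ finrank K (Y0 → K) := LinearMap.finrank_le_finrank_of_injective hinj
    _ = Y0.card := by rw [Module.finrank_pi, Fintype.card_coe]
    _ = Y.card - k := hY0card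


/-- The key structure lemma for λ-like spaces of dual matrices whose rows outside `I₀`
are multiples of fixed vectors `u i`. -/
lemma structure_lemma (ht : 1 ≤ t)
    (G : Matrix (Fin k) (Fin n) K) (hMDS : IsMDS G)
    (P : Fin t → Fin t → Matrix (Fin k) (Fin n) K)
    (R I₀ : Finset (Fin n)) (hsub : I₀ ⊆ R) (hR : R.card = k + t) (hI : I₀.card < k)
    (Wm : (Fin t → K) →ₗ[K] Matrix (Fin n) (Fin t) K)
    (hdual : ∀ x, PiggyDual G P (Wm x))
    (hsupp : ∀ x, ∀ i, i ∉ R → Wm x i = 0)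
    (hinj : Function.Injective Wm)
    (u : Fin n → Fin t → K) (f : Fin n → ((Fin t → K) →ₗ[K] K))
    (hu : ∀ i ∈ R \ I₀, u i ≠ 0)
    (hline : ∀ i ∈ R \ I₀, ∀ x, Wm x i = f i x • u i) :
    ∃ m : Fin t, (∀ i ∈ R \ I₀, u i m ≠ 0 ∧ ∀ j : Fin t, m < j → u i j = 0) ∧
      (∀ x, ∀ j : Fin t, m < j → ∀ i, Wm x i j = 0) ∧
      (∀ x, (∀ i, Wm x i m = 0) → x = 0) := by
  classical
  have hkn : k ≤ n := by
    have := R.card_le_univ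
    rw [hR] at this
    simp only [Fintype.card_fin] at this
    omega
  -- the filtration
  set U : ℕ → Submodule K (Fin t → K) := fun m =>
    { carrier := {x | ∀ j : Fin t, m ≤ (j : ℕ) → ∀ i, Wm x i j = 0}
      add_mem' := by
        intro a b ha hb j hj i
        rw [map_add]
        show Wm a i j + Wm b i j = 0
        rw [ha j hj i, hb j hj i, add_zero]
      zero_mem' := by
        intro j hj i
        rw [map_zero]
        rfl
      smul_mem' := by
        intro c a ha j hj i
        rw [LinearMap.map_smul]
        show c * Wm a i j = 0
        rw [ha j hj i, mul_zero] } with hU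
  have hUmem : ∀ m x, x ∈ U m ↔ ∀ j : Fin t, m ≤ (j : ℕ) → ∀ i, Wm x i j = 0 := fun m x => Iff.rfl
  have hUmono : ∀ m, U m ≤ U (m + 1) := by
    intro m x hx j hj i
    exact hx j (by omega) i
  -- the top sets
  set T : Fin t → Finset (Fin n) := fun m =>
    (R \ I₀).filter (fun i => u i m ≠ 0 ∧ ∀ j : Fin t, m < j → u i j = 0) with hT
  set D : ℕ → ℕ := fun m => if h : m < t then (T ⟨m, h⟩).card + I₀.card - k else 0 with hD
  -- the jump bound
  have jump : ∀ m, m < t → finrank K (U (m + 1)) ≤ finrank K (U m) + D m := by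
    intro m hm
    set mf : Fin t := ⟨m, hm⟩ with hmf
    set φ : (U (m + 1)) →ₗ[K] (Fin n → K) :=
      { toFun := fun x => fun i => Wm x.1 i mf
        map_add' := by
          intro a b; funext i
          show Wm (a.1 + b.1) i mf = Wm a.1 i mf + Wm b.1 i mf
          rw [_root_.map_add]; rfl
        map_smul' := by
          intro c a; funext i
          show Wm (c • a.1) i mf = c * Wm a.1 i mf
          rw [LinearMap.map_smul]; rfl } with hφ
    have hker : LinearMap.ker φ = Submodule.comap (U (m + 1)).subtype (U m) := by
      ext x
      simp only [LinearMap.mem_ker, Submodule.mem_comap, Submodule.subtype_apply]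
      constructor
      · intro hx
        intro j hj i
        rcases Nat.lt_or_ge m (j : ℕ) with h | h
        · exact x.2 j (by omega) i
        · have hjm : j = mf := by
            apply Fin.ext
            show (j : ℕ) = m
            omega
          rw [hjm]
          exact congrFun hx i
      · intro hx
        funext i
        exact hx mf (le_refl m) i
    have hrange : finrank K (LinearMap.range φ) ≤ D m := by
      have hb := kerG_supp_dim_le hkn hMDS (LinearMap.range φ) (T mf ∪ I₀) ?_ ?_
      · refine le_trans hb ?_
        have : (T mf ∪ I₀).card ≤ (T mf).card + I₀.card := Finset.card_union_le _ _
        have hDm : D m = (T mf).card + I₀.card - k := by simp [hD, hm, hmf]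
        omega
      · rintro z ⟨x, rfl⟩
        have hd := hdual x.1 mf
        have hz : ∑ j ∈ Finset.Ioi mf, P mf j *ᵥ (fun r => Wm x.1 r j) = 0 := by
          apply Finset.sum_eq_zero
          intro j hj
          have hj' : mf < j := Finset.mem_Ioi.mp hj
          have hmv : (mf : ℕ) = m := rfl
          rw [Fin.lt_def] at hj'
          have hcol : (fun r => Wm x.1 r j) = (0 : Fin n → K) := by
            funext r
            exact x.2 j (by omega) r
          rw [hcol, Matrix.mulVec_zero]
        rw [hz, add_zero] at hd
        exact hd
      · rintro z ⟨x, rfl⟩ i hi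
        rw [Finset.mem_union, not_or] at hi
        show Wm x.1 i mf = 0
        by_cases hiR : i ∈ R \ I₀
        · rw [hline i hiR]
          show f i x.1 * u i mf = 0
          by_cases hf : f i x.1 = 0
          · rw [hf, zero_mul]
          · have hutop : ∀ j : Fin t, mf < j → u i j = 0 := by
              intro j hj
              rw [Fin.lt_def] at hj
              have hmv : (mf : ℕ) = m := rfl
              have := x.2 j (by omega) i
              rw [hline i hiR] at this
              have : f i x.1 * u i j = 0 := this
              rcases mul_eq_zero.mp this with h | h
              · exact absurd h hf
              · exact h
            by_cases hum : u i mf = 0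
            · rw [hum, mul_zero]
            · exact absurd (Finset.mem_filter.mpr ⟨hiR, hum, hutop⟩) hi.1
        · have hiR' : i ∉ R := by
            intro hiRR
            exact hiR (Finset.mem_sdiff.mpr ⟨hiRR, hi.2⟩)
          rw [hsupp x.1 i hiR']
          rfl
    have hrn := LinearMap.finrank_range_add_finrank_ker φ
    have hkf : finrank K (LinearMap.ker φ) = finrank K (U m) := by
      rw [hker]
      exact LinearEquiv.finrank_eq (Submodule.comapSubtypeEquivOfLe (hUmono m))
    omega
  -- bottom and top of the filtration
  have hU0 : U 0 = ⊥ := by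
    rw [Submodule.eq_bot_iff]
    intro x hx
    apply hinj
    rw [map_zero]
    funext i j
    exact hx j (Nat.zero_le _) i
  have hUt : ∀ m, t ≤ m → U m = ⊤ := by
    intro m hm
    rw [Submodule.eq_top_iff']
    intro x j hj i
    exact absurd j.isLt (by omega)
  -- partial sums of jumps
  have upto : ∀ m, finrank K (U m) ≤ ∑ m' ∈ Finset.range m, D m' := by
    intro m
    induction m with
    | zero => rw [hU0]; simp
    | succ m ih =>
      rcases Nat.lt_or_ge m t with h | h
      · calc finrank K (U (m + 1)) ≤ finrank K (U m) + D m := jump m h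
          _ ≤ (∑ m' ∈ Finset.range m, D m') + D m := by omega
          _ = ∑ m' ∈ Finset.range (m + 1), D m' := (Finset.sum_range_succ D m).symm
      · have hDm : D m = 0 := by simp [hD, Nat.not_lt.mpr h]
        have hUeq : U (m + 1) = U m := by
          apply le_antisymm
          · intro x hx j hj i
            exact hx j (by omega) i
          · exact hUmono m
        rw [hUeq]
        calc finrank K (U m) ≤ ∑ m' ∈ Finset.range m, D m' := ih
          _ ≤ ∑ m' ∈ Finset.range (m + 1), D m' := by
            rw [Finset.sum_range_succ]; omega
  have fromtop : ∀ d m, m + d = t → t ≤ finrank K (U m) + ∑ m' ∈ Finset.Ico m t, D m' := by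
    intro d
    induction d with
    | zero =>
      intro m hm
      have : U m = ⊤ := hUt m (by omega)
      rw [this]
      have : finrank K (⊤ : Submodule K (Fin t → K)) = t := by
        rw [finrank_top, Module.finrank_pi, Fintype.card_fin]
      omega
    | succ d ih =>
      intro m hm
      have hmt : m < t := by omega
      have h1 := ih (m + 1) (by omega)
      have h2 := jump m hmt
      have h3 : ∑ m' ∈ Finset.Ico m t, D m' = D m + ∑ m' ∈ Finset.Ico (m + 1) t, D m' :=
        Finset.sum_eq_sum_Ico_succ_bot hmt D
      omega
  have htotal : t ≤ ∑ m' ∈ Finset.range t, D m' := by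
    have h := fromtop t 0 (by omega)
    rw [hU0, finrank_bot] at h
    rw [Finset.range_eq_Ico]
    omega
  -- the partition of R \ I₀ by top coordinates
  have hTdisj : ∀ m1 m2 : Fin t, m1 ≠ m2 → Disjoint (T m1) (T m2) := by
    intro m1 m2 hne12
    rcases lt_or_gt_of_ne hne12 with h | h
    all_goals {
      rw [Finset.disjoint_left]
      intro i hi1 hi2
      have h1 := (Finset.mem_filter.mp hi1).2
      have h2 := (Finset.mem_filter.mp hi2).2
      first
      | exact h2.1 (h1.2 m2 h)
      | exact h1.1 (h2.2 m1 h) }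
  have hTcover : (R \ I₀) = Finset.univ.biUnion T := by
    apply Finset.ext
    intro i
    rw [Finset.mem_biUnion]
    constructor
    · intro hi
      have hui := hu i hi
      have hne : (Finset.univ.filter fun j : Fin t => u i j ≠ 0).Nonempty := by
        by_contra hcon
        apply hui
        rw [Finset.not_nonempty_iff_eq_empty, Finset.filter_eq_empty_iff] at hcon
        funext j
        have := hcon (Finset.mem_univ j)
        simpa using this
      set mm := (Finset.univ.filter fun j : Fin t => u i j ≠ 0).max' hne with hmm
      refine ⟨mm, Finset.mem_univ mm, ?_⟩
      rw [hT]
      rw [Finset.mem_filter]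
      refine ⟨hi, ?_, ?_⟩
      · exact (Finset.mem_filter.mp ((Finset.univ.filter fun j : Fin t => u i j ≠ 0).max'_mem hne)).2
      · intro j hj
        by_contra hc
        have : j ∈ Finset.univ.filter fun j : Fin t => u i j ≠ 0 := by simp [hc]
        exact absurd (Finset.le_max' _ j this) (not_le.mpr hj)
    · rintro ⟨m, _, hm⟩
      exact (Finset.mem_filter.mp hm).1
  have hTsum : ∑ m : Fin t, (T m).card = k + t - I₀.card := by
    have h1 : (Finset.univ.biUnion T).card = ∑ m : Fin t, (T m).card := by
      apply Finset.card_biUnion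
      intro m1 _ m2 _ h
      exact hTdisj m1 m2 h
    rw [← h1, ← hTcover, Finset.card_sdiff_of_subset hsub, hR]
  -- counting: a single active level
  set e := I₀.card with he
  set Tc : ℕ → ℕ := fun m => if h : m < t then (T ⟨m, h⟩).card + 0 else 0 with hTc
  have hTcv : ∀ m (h : m < t), Tc m = (T ⟨m, h⟩).card := by
    intro m h; simp [hTc, h]
  have hTcsum : ∑ m' ∈ Finset.range t, Tc m' = k + t - e := by
    have h1 : ∑ m : Fin t, (T m).card = ∑ m : Fin t, Tc (m : ℕ) := by
      apply Finset.sum_congr rfl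
      intro m _
      rw [hTcv (m : ℕ) m.isLt]
    rw [← Fin.sum_univ_eq_sum_range (fun m => Tc m) t, ← h1, hTsum, he]
  set M := (Finset.range t).filter (fun m => D m ≠ 0) with hM
  have hMel : ∀ m ∈ M, m < t ∧ k < Tc m + e ∧ D m + k = Tc m + e := by
    intro m hm
    rw [hM, Finset.mem_filter, Finset.mem_range] at hm
    obtain ⟨hmt, hD0⟩ := hm
    have hDv : D m = Tc m + e - k := by
      rw [hD]
      simp only [hmt, dif_pos]
      rw [hTcv m hmt, he]
    constructor
    · exact hmt
    constructor
    · by_contra hc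
      push_neg at hc
      apply hD0
      rw [hDv]
      omega
    · rw [hDv]
      have : k < Tc m + e := by
        by_contra hc
        push_neg at hc
        apply hD0
        rw [hDv]; omega
      omega
  have hMsum : t ≤ ∑ m' ∈ M, D m' := by
    rw [hM]
    rw [Finset.sum_filter_ne_zero]
    exact htotal
  have hMTc : ∑ m' ∈ M, Tc m' ≤ k + t - e := by
    rw [← hTcsum]
    apply Finset.sum_le_sum_of_subset
    rw [hM]
    exact Finset.filter_subset _ _
  have hMcard : M.card ≤ 1 := by
    by_contra hc
    push_neg at hc
    have hkey : ∑ m' ∈ M, (D m' + k) ≤ ∑ m' ∈ M, (Tc m' + e) := by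
      apply Finset.sum_le_sum
      intro m hm
      exact le_of_eq (hMel m hm).2.2
    rw [Finset.sum_add_distrib, Finset.sum_add_distrib, Finset.sum_const, Finset.sum_const,
      smul_eq_mul, smul_eq_mul] at hkey
    -- t + |M| * k ≤ (k + t - e) + |M| * e
    have hek : e < k := by rw [he]; exact hI
    have h2 : 2 ≤ M.card := hc
    have hfin : (t : ℤ) + M.card * k ≤ (k + t - e) + M.card * e := by
      have h1 : ((∑ m' ∈ M, D m' : ℕ) : ℤ) + M.card * k ≤ ((∑ m' ∈ M, Tc m' : ℕ) : ℤ) + M.card * e := by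
        push_cast
        exact_mod_cast (by exact_mod_cast hkey : ((∑ m' ∈ M, D m' + M.card * k : ℕ) : ℤ) ≤ ((∑ m' ∈ M, Tc m' + M.card * e : ℕ) : ℤ))
      have h3 : ((∑ m' ∈ M, Tc m' : ℕ) : ℤ) ≤ (k : ℤ) + t - e := by
        have := hMTc
        omega
      have h4 : (t : ℤ) ≤ ((∑ m' ∈ M, D m' : ℕ) : ℤ) := by exact_mod_cast hMsum
      omega
    have hc2 : (2 : ℤ) ≤ (M.card : ℤ) := by exact_mod_cast h2
    have hek' : (e : ℤ) + 1 ≤ (k : ℤ) := by exact_mod_cast hek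
    nlinarith [mul_le_mul_of_nonneg_right hc2 (by linarith : (0 : ℤ) ≤ (k : ℤ) - e)]
  have hMne : M.Nonempty := by
    rw [Finset.nonempty_iff_ne_empty]
    intro hemp
    rw [hemp, Finset.sum_empty] at hMsum
    omega
  obtain ⟨ms, hms⟩ := Finset.card_eq_one.mp (le_antisymm hMcard (Finset.card_pos.mpr hMne))
  have hmsM : ms ∈ M := by rw [hms]; exact Finset.mem_singleton_self ms
  obtain ⟨hmst, hmsk, hmsD⟩ := hMel ms hmsM
  have hDms : t ≤ D ms := by
    rw [hms, Finset.sum_singleton] at hMsum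
    exact hMsum
  have hDzero : ∀ m', m' ≠ ms → D m' = 0 := by
    intro m' hm'
    by_contra hc
    rcases Nat.lt_or_ge m' t with h | h
    · have : m' ∈ M := by
        rw [hM, Finset.mem_filter, Finset.mem_range]
        exact ⟨h, hc⟩
      rw [hms, Finset.mem_singleton] at this
      exact hm' this
    · apply hc
      rw [hD]
      simp [Nat.not_lt.mpr h]
  set mf : Fin t := ⟨ms, hmst⟩ with hmf
  have hTfull : T mf = R \ I₀ := by
    apply Finset.eq_of_subset_of_card_le (Finset.filter_subset _ _)
    have h1 : (R \ I₀).card = k + t - e := by rw [Finset.card_sdiff_of_subset hsub, hR, he]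
    have h2 : k + t - e ≤ Tc ms := by omega
    rw [hTcv ms hmst] at h2
    rw [h1]
    exact h2
  have hUbot : U ms = ⊥ := by
    have h1 : finrank K (U ms) ≤ ∑ m' ∈ Finset.range ms, D m' := upto ms
    have h2 : ∑ m' ∈ Finset.range ms, D m' = 0 := by
      apply Finset.sum_eq_zero
      intro m' hm'
      rw [Finset.mem_range] at hm'
      exact hDzero m' (by omega)
    rw [h2] at h1
    have h3 : finrank K (U ms) = 0 := by omega
    exact Submodule.finrank_eq_zero.mp h3
  have hUtop : U (ms + 1) = ⊤ := by
    have h1 := fromtop (t - (ms + 1)) (ms + 1) (by omega)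
    have h2 : ∑ m' ∈ Finset.Ico (ms + 1) t, D m' = 0 := by
      apply Finset.sum_eq_zero
      intro m' hm'
      rw [Finset.mem_Ico] at hm'
      exact hDzero m' (by omega)
    rw [h2] at h1
    apply Submodule.eq_top_of_finrank_eq
    have h3 : finrank K (Fin t → K) = t := by rw [Module.finrank_pi, Fintype.card_fin]
    have h4 : finrank K (U (ms + 1)) ≤ t := le_trans (Submodule.finrank_le _) (le_of_eq h3)
    rw [h3]
    omega
  refine ⟨mf, ?_, ?_, ?_⟩
  · intro i hi
    have hi' : i ∈ T mf := by rw [hTfull]; exact hi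
    exact (Finset.mem_filter.mp hi').2
  · intro x j hj i
    have hx : x ∈ U (ms + 1) := by rw [hUtop]; trivial
    rw [Fin.lt_def] at hj
    have hmv : (mf : ℕ) = ms := rfl
    exact hx j (by omega) i
  · intro x hx
    have hx1 : x ∈ U (ms + 1) := by rw [hUtop]; trivial
    have hx2 : x ∈ U ms := by
      intro j hj i
      rcases Nat.lt_or_ge ms (j : ℕ) with h | h
      · exact hx1 j (by omega) i
      · have hjm : j = mf := by
          apply Fin.ext
          show (j : ℕ) = ms
          omega
        rw [hjm]
        exact hx i
    rw [hUbot] at hx2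
    exact hx2


/-- extraction of the linear parametrization and the row lines of a scheme -/
lemma extract_scheme
    (G : Matrix (Fin k) (Fin n) K) (P : Fin t → Fin t → Matrix (Fin k) (Fin n) K)
    (R : Finset (Fin n)) (istar : Fin n) (histar : istar ∈ R) (hR : R.card = k + t)
    (W : Fin t → Matrix (Fin n) (Fin t) K)
    (hdual : ∀ j, PiggyDual G P (W j))
    (hsupp : ∀ i : Fin n, (∃ j, W j i ≠ 0) ↔ i ∈ R)
    (hfull : finrank K (Submodule.span K (Set.range fun j => W j istar)) = t)
    (hbw : ∑ i ∈ R.erase istar,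
      finrank K (Submodule.span K (Set.range fun j => W j i)) ≤ k + t - 1) :
    ∃ (Wm : (Fin t → K) →ₗ[K] Matrix (Fin n) (Fin t) K)
      (u : Fin n → Fin t → K) (f : Fin n → ((Fin t → K) →ₗ[K] K)),
      (∀ x, Wm x istar = x) ∧ (∀ x, PiggyDual G P (Wm x)) ∧
      (∀ x, ∀ i, i ∉ R → Wm x i = 0) ∧
      (∀ i ∈ R.erase istar, u i ≠ 0) ∧
      (∀ i ∈ R.erase istar, ∀ x, Wm x i = f i x • u i) := by
  classical
  -- basis of K^t from the rows at istar
  have hcard : Fintype.card (Fin t) = Set.finrank K (Set.range fun j => W j istar) := by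
    rw [Fintype.card_fin, Set.finrank]
    exact hfull.symm
  have hind : LinearIndependent K (fun j => W j istar) :=
    linearIndependent_iff_card_eq_finrank_span.mpr hcard
  have hspan : ⊤ ≤ Submodule.span K (Set.range fun j => W j istar) := by
    have h1 : finrank K (Fin t → K) = t := by rw [Module.finrank_pi, Fintype.card_fin]
    rw [← Submodule.eq_top_of_finrank_eq (hfull.trans h1.symm)]
  set b : Basis (Fin t) K (Fin t → K) := Basis.mk hind hspan with hb
  set Wm : (Fin t → K) →ₗ[K] Matrix (Fin n) (Fin t) K := b.constr K (fun j => W j) with hWm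
  -- row at istar is the identity
  have hrow : ∀ x, Wm x istar = x := by
    intro x
    have h1 : Wm x = ∑ j, b.equivFun x j • W j := Basis.constr_apply_fintype K b _ x
    have h2 : Wm x istar = ∑ j, b.equivFun x j • W j istar := by
      rw [h1]
      erw [Finset.sum_apply]
      rfl
    rw [h2]
    have h3 : ∑ j, b.equivFun x j • W j istar = ∑ j, b.equivFun x j • b j := by
      apply Finset.sum_congr rfl
      intro j _
      rw [hb, Basis.coe_mk]
    rw [h3, b.sum_equivFun x]
  -- duality
  have hWmdual : ∀ x, PiggyDual G P (Wm x) := by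
    intro x
    rw [← mem_dualSub (G := G) (P := P)]
    have h1 : Wm x = ∑ j, b.equivFun x j • W j := Basis.constr_apply_fintype K b _ x
    rw [h1]
    apply Submodule.sum_mem
    intro j _
    apply Submodule.smul_mem
    rw [mem_dualSub]
    exact hdual j
  -- support
  have hWmsupp : ∀ x, ∀ i, i ∉ R → Wm x i = 0 := by
    intro x i hiR
    have h1 : Wm x = ∑ j, b.equivFun x j • W j := Basis.constr_apply_fintype K b _ x
    rw [h1]
    erw [Finset.sum_apply]
    apply Finset.sum_eq_zero
    intro j _
    have hWj : W j i = 0 := by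
      by_contra hc
      exact hiR ((hsupp i).mp ⟨j, hc⟩)
    show b.equivFun x j • W j i = 0
    rw [hWj, smul_zero]
  -- the row spans at i ≠ istar are all one-dimensional
  have hone : ∀ i ∈ R.erase istar,
      finrank K (Submodule.span K (Set.range fun j => W j i)) = 1 := by
    intro i hi
    have hpos : ∀ i' ∈ R.erase istar,
        1 ≤ finrank K (Submodule.span K (Set.range fun j => W j i')) := by
      intro i' hi'
      by_contra hc
      push_neg at hc
      have h0 : finrank K (Submodule.span K (Set.range fun j => W j i')) = 0 := by omega
      have hbot := Submodule.finrank_eq_zero.mp h0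
      have hi'R : i' ∈ R := Finset.mem_of_mem_erase hi'
      obtain ⟨j, hj⟩ := (hsupp i').mpr hi'R
      apply hj
      have : W j i' ∈ Submodule.span K (Set.range fun j => W j i') :=
        Submodule.subset_span ⟨j, rfl⟩
      rw [hbot] at this
      exact this
    by_contra hc
    have h2 : 2 ≤ finrank K (Submodule.span K (Set.range fun j => W j i)) := by
      have := hpos i hi
      omega
    have hcard : (R.erase istar).card = k + t - 1 := by
      rw [Finset.card_erase_of_mem]
      · rw [hR]
      · exact histar
    have hlt : (R.erase istar).card < ∑ i' ∈ R.erase istar,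
        finrank K (Submodule.span K (Set.range fun j => W j i')) := by
      have h3 : ∑ i' ∈ R.erase istar, 1 <
          ∑ i' ∈ R.erase istar, finrank K (Submodule.span K (Set.range fun j => W j i')) := by
        apply Finset.sum_lt_sum
        · intro i' hi'
          exact hpos i' hi'
        · exact ⟨i, hi, by omega⟩
      simpa using h3
    rw [hcard] at hlt
    omega
  -- extract generators
  have hgen : ∀ i ∈ R.erase istar, ∃ ui : Fin t → K, ui ≠ 0 ∧
      Submodule.span K (Set.range fun j => W j i) = Submodule.span K {ui} := by
    intro i hi
    have h1 := hone i hi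
    have hne : Submodule.span K (Set.range fun j => W j i) ≠ ⊥ := by
      intro hbot
      rw [hbot] at h1
      simp at h1
    obtain ⟨ui, huimem, hui0⟩ := (Submodule.ne_bot_iff _).mp hne
    refine ⟨ui, hui0, ?_⟩
    symm
    apply Submodule.eq_of_le_of_finrank_le
    · rw [Submodule.span_le]
      intro y hy
      rw [Set.mem_singleton_iff] at hy
      rw [hy]
      exact huimem
    · rw [h1, finrank_span_singleton hui0]
  choose! u hu0 huspan using hgen
  -- construct the coefficient functionals
  have hfex : ∀ i ∈ R.erase istar, ∃ fi : (Fin t → K) →ₗ[K] K,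
      ∀ x, Wm x i = fi x • u i := by
    intro i hi
    have hspan_i := huspan i hi
    -- every row of Wm x at i is in span {u i}
    have hmem : ∀ x, Wm x i ∈ Submodule.span K {u i} := by
      intro x
      rw [← hspan_i]
      have h1 : Wm x = ∑ j, b.equivFun x j • W j := Basis.constr_apply_fintype K b _ x
      rw [h1]
      erw [Finset.sum_apply]
      apply Submodule.sum_mem
      intro j _
      show b.equivFun x j • W j i ∈ _
      apply Submodule.smul_mem
      exact Submodule.subset_span ⟨j, rfl⟩
    -- pick a nonzero coordinate of u i
    have hune := hu0 i hi
    have hex : ∃ j0 : Fin t, u i j0 ≠ 0 := by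
      by_contra hc
      push_neg at hc
      exact hune (funext hc)
    obtain ⟨j0, hj0⟩ := hex
    refine ⟨{ toFun := fun x => (u i j0)⁻¹ * Wm x i j0
              map_add' := by
                intro a b'
                show (u i j0)⁻¹ * Wm (a + b') i j0 = _
                rw [map_add]
                show (u i j0)⁻¹ * (Wm a i j0 + Wm b' i j0) = _
                ring
              map_smul' := by
                intro c a
                show (u i j0)⁻¹ * Wm (c • a) i j0 = _
                rw [LinearMap.map_smul]
                show (u i j0)⁻¹ * (c * Wm a i j0) = _
                simp only [smul_eq_mul, RingHom.id_apply]
                ring }, ?_⟩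
    intro x
    obtain ⟨a, ha⟩ := Submodule.mem_span_singleton.mp (hmem x)
    simp only [LinearMap.coe_mk, AddHom.coe_mk]
    rw [← ha]
    show a • u i = ((u i j0)⁻¹ * (a • u i) j0) • u i
    have h2 : (a • u i) j0 = a * u i j0 := rfl
    rw [h2]
    congr 1
    field_simp
  choose! f hf using hfex
  exact ⟨Wm, u, f, hrow, hWmdual, hWmsupp, hu0, hf⟩


/-- helper: a nonzero common kernel vector for t-1 functionals -/
lemma exists_kernel_vec (ht : 1 ≤ t) (T : Finset (Fin n)) (hT : T.card = t - 1)
    (f : Fin n → ((Fin t → K) →ₗ[K] K)) :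
    ∃ x : Fin t → K, x ≠ 0 ∧ ∀ i ∈ T, f i x = 0 := by
  classical
  set F : (Fin t → K) →ₗ[K] (T → K) := LinearMap.pi (fun i : T => f i.1) with hF
  have hnotinj : ¬ Function.Injective F := by
    intro hinj
    have h1 := LinearMap.finrank_le_finrank_of_injective hinj
    rw [Module.finrank_pi, Module.finrank_pi, Fintype.card_fin, Fintype.card_coe, hT] at h1
    omega
  have hker : LinearMap.ker F ≠ ⊥ := by
    intro hc
    exact hnotinj (LinearMap.ker_eq_bot.mp hc)
  obtain ⟨x, hxker, hx0⟩ := (Submodule.ne_bot_iff _).mp hker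
  refine ⟨x, hx0, ?_⟩
  intro i hi
  have := congrFun (LinearMap.mem_ker.mp hxker) ⟨i, hi⟩
  simpa [hF, LinearMap.pi_apply] using this

set_option maxHeartbeats 1000000 in
theorem main_false
    (hk : 3 ≤ k) (ht : 2 ≤ t)
    (G : Matrix (Fin k) (Fin n) K) (hMDS : IsMDS G)
    (P : Fin t → Fin t → Matrix (Fin k) (Fin n) K)
    (iW iV : Fin n) (hne : iW ≠ iV)
    (R : Finset (Fin n)) (hR : R.card = k + t) (hiWR : iW ∈ R) (hiVR : iV ∈ R)
    (W V : Fin t → Matrix (Fin n) (Fin t) K)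
    (hWdual : ∀ j, PiggyDual G P (W j))
    (hVdual : ∀ j, PiggyDual G P (V j))
    (hWsupp : ∀ i : Fin n, (∃ j, W j i ≠ 0) ↔ i ∈ R)
    (hVsupp : ∀ i : Fin n, (∃ j, V j i ≠ 0) ↔ i ∈ R)
    (hWfull : Module.finrank K (Submodule.span K (Set.range fun j => W j iW)) = t)
    (hVfull : Module.finrank K (Submodule.span K (Set.range fun j => V j iV)) = t)
    (hWbw : ∑ i ∈ R.erase iW,
      Module.finrank K (Submodule.span K (Set.range fun j => W j i)) ≤ k + t - 1)
    (hVbw : ∑ i ∈ R.erase iV,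
      Module.finrank K (Submodule.span K (Set.range fun j => V j i)) ≤ k + t - 1) :
    False := by
  classical
  have hkn : k ≤ n := by
    have := R.card_le_univ
    rw [hR] at this
    simp only [Fintype.card_fin] at this
    omega
  set lastIdx : Fin t := ⟨t - 1, by omega⟩ with hlast
  -- extract the two schemes
  obtain ⟨Wm, u, fW, hWrow, hWmdual, hWmsupp, hu0, hWline⟩ :=
    extract_scheme G P R iW hiWR hR W hWdual hWsupp hWfull hWbw
  obtain ⟨Vm, v, fV, hVrow, hVmdual, hVmsupp, hv0, hVline⟩ :=
    extract_scheme G P R iV hiVR hR V hVdual hVsupp hVfull hVbw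
  have hWinj : Function.Injective Wm := by
    intro a b hab
    have h1 : Wm a iW = Wm b iW := by rw [hab]
    rw [hWrow, hWrow] at h1
    exact h1
  have hVinj : Function.Injective Vm := by
    intro a b hab
    have h1 : Vm a iV = Vm b iV := by rw [hab]
    rw [hVrow, hVrow] at h1
    exact h1
  have herase : R \ {iW} = R.erase iW := (Finset.erase_eq R iW).symm
  have heraseV : R \ {iV} = R.erase iV := (Finset.erase_eq R iV).symm
  -- structure of the W scheme
  obtain ⟨mW, hmWu, hmWtop, hmWinj⟩ :=
    structure_lemma (by omega) G hMDS P R {iW} (Finset.singleton_subset_iff.mpr hiWR) hR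
      (by rw [Finset.card_singleton]; omega) Wm hWmdual hWmsupp hWinj u fW
      (by rw [herase]; exact hu0) (by rw [herase]; exact hWline)
  obtain ⟨mV, hmVv, hmVtop, hmVinj⟩ :=
    structure_lemma (by omega) G hMDS P R {iV} (Finset.singleton_subset_iff.mpr hiVR) hR
      (by rw [Finset.card_singleton]; omega) Vm hVmdual hVmsupp hVinj v fV
      (by rw [heraseV]; exact hv0) (by rw [heraseV]; exact hVline)
  -- pin both top levels to the last coordinate
  have hfinle : ∀ j : Fin t, j ≤ lastIdx := by
    intro j
    rw [Fin.le_def]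
    have := j.isLt
    show (j : ℕ) ≤ t - 1
    omega
  have hmWlast : mW = lastIdx := by
    by_contra hc
    have hlt : mW < lastIdx := lt_of_le_of_ne (hfinle mW) hc
    have h1 := hmWtop (Pi.single lastIdx 1) lastIdx hlt iW
    rw [hWrow] at h1
    rw [Pi.single_eq_same] at h1
    exact one_ne_zero h1
  have hmVlast : mV = lastIdx := by
    by_contra hc
    have hlt : mV < lastIdx := lt_of_le_of_ne (hfinle mV) hc
    have h1 := hmVtop (Pi.single lastIdx 1) lastIdx hlt iV
    rw [hVrow] at h1
    rw [Pi.single_eq_same] at h1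
    exact one_ne_zero h1
  rw [hmWlast] at hmWu hmWtop hmWinj
  rw [hmVlast] at hmVv hmVtop hmVinj
  have hulast : ∀ i ∈ R.erase iW, u i lastIdx ≠ 0 := by
    intro i hi
    exact (hmWu i (by rw [herase]; exact hi)).1
  have hvlast : ∀ i ∈ R.erase iV, v i lastIdx ≠ 0 := by
    intro i hi
    exact (hmVv i (by rw [heraseV]; exact hi)).1
  -- the last-column maps
  set ΘW : (Fin t → K) →ₗ[K] (Fin n → K) :=
    { toFun := fun x => fun i => Wm x i lastIdx
      map_add' := by
        intro a b; funext i
        show Wm (a + b) i lastIdx = Wm a i lastIdx + Wm b i lastIdx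
        rw [_root_.map_add]; rfl
      map_smul' := by
        intro c a; funext i
        show Wm (c • a) i lastIdx = c * Wm a i lastIdx
        rw [LinearMap.map_smul]; rfl } with hΘW
  set ΘV : (Fin t → K) →ₗ[K] (Fin n → K) :=
    { toFun := fun x => fun i => Vm x i lastIdx
      map_add' := by
        intro a b; funext i
        show Vm (a + b) i lastIdx = Vm a i lastIdx + Vm b i lastIdx
        rw [_root_.map_add]; rfl
      map_smul' := by
        intro c a; funext i
        show Vm (c • a) i lastIdx = c * Vm a i lastIdx
        rw [LinearMap.map_smul]; rfl } with hΘV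
  have hΘWinj : Function.Injective ΘW := by
    intro a b hab
    have h1 : ΘW (a - b) = 0 := by rw [map_sub, hab, sub_self]
    have h2 : a - b = 0 := by
      apply hmWinj
      intro i
      have := congrFun h1 i
      exact this
    rwa [sub_eq_zero] at h2
  have hΘVinj : Function.Injective ΘV := by
    intro a b hab
    have h1 : ΘV (a - b) = 0 := by rw [map_sub, hab, sub_self]
    have h2 : a - b = 0 := by
      apply hmVinj
      intro i
      exact congrFun h1 i
    rwa [sub_eq_zero] at h2
  -- the kernel property of the last column
  have hIoiLast : ∀ j : Fin t, j ∈ Finset.Ioi lastIdx → False := by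
    intro j hj
    rw [Finset.mem_Ioi] at hj
    exact absurd (hfinle j) (not_le.mpr hj)
  have hΘWker : ∀ x, G *ᵥ (ΘW x) = 0 := by
    intro x
    have h1 := hWmdual x lastIdx
    have h2 : ∑ j ∈ Finset.Ioi lastIdx, P lastIdx j *ᵥ (fun r => Wm x r j) = 0 := by
      apply Finset.sum_eq_zero
      intro j hj
      exact absurd hj (fun h => hIoiLast j h)
    rw [h2, add_zero] at h1
    exact h1
  have hΘVker : ∀ x, G *ᵥ (ΘV x) = 0 := by
    intro x
    have h1 := hVmdual x lastIdx
    have h2 : ∑ j ∈ Finset.Ioi lastIdx, P lastIdx j *ᵥ (fun r => Vm x r j) = 0 := by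
      apply Finset.sum_eq_zero
      intro j hj
      exact absurd hj (fun h => hIoiLast j h)
    rw [h2, add_zero] at h1
    exact h1
  have hΘWker' : ∀ x, G *ᵥ (fun i => Wm x i lastIdx) = 0 := hΘWker
  have hΘVker' : ∀ x, G *ᵥ (fun i => Vm x i lastIdx) = 0 := hΘVker
  -- Csub
  set Csub : Submodule K (Fin n → K) :=
    { carrier := {z | G *ᵥ z = 0 ∧ ∀ i, i ∉ R → z i = 0}
      zero_mem' := ⟨Matrix.mulVec_zero G, fun i _ => rfl⟩
      add_mem' := by
        rintro a b ⟨ha1, ha2⟩ ⟨hb1, hb2⟩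
        refine ⟨?_, ?_⟩
        · rw [Matrix.mulVec_add, ha1, hb1, add_zero]
        · intro i hi
          show a i + b i = 0
          rw [ha2 i hi, hb2 i hi, add_zero]
      smul_mem' := by
        rintro c a ⟨ha1, ha2⟩
        refine ⟨?_, ?_⟩
        · rw [Matrix.mulVec_smul, ha1, smul_zero]
        · intro i hi
          show c * a i = 0
          rw [ha2 i hi, mul_zero] } with hCsub
  have hCsubfin : finrank K Csub ≤ t := by
    have := kerG_supp_dim_le hkn hMDS Csub R (fun z hz => hz.1) (fun z hz => hz.2)
    rw [hR] at this
    omega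
  have hfinrank_t : finrank K (Fin t → K) = t := by rw [Module.finrank_pi, Fintype.card_fin]
  have hWrange : LinearMap.range ΘW = Csub := by
    apply Submodule.eq_of_le_of_finrank_le
    · rintro z ⟨x, rfl⟩
      refine ⟨hΘWker x, ?_⟩
      intro i hi
      show Wm x i lastIdx = 0
      rw [hWmsupp x i hi]
      rfl
    · rw [LinearMap.finrank_range_of_inj hΘWinj, hfinrank_t]
      exact hCsubfin
  have hVrange : LinearMap.range ΘV = Csub := by
    apply Submodule.eq_of_le_of_finrank_le
    · rintro z ⟨x, rfl⟩
      refine ⟨hΘVker x, ?_⟩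
      intro i hi
      show Vm x i lastIdx = 0
      rw [hVmsupp x i hi]
      rfl
    · rw [LinearMap.finrank_range_of_inj hΘVinj, hfinrank_t]
      exact hCsubfin
  -- the transfer map Φ
  have hmem : ∀ x, ΘW x ∈ LinearMap.range ΘV := by
    intro x
    rw [hVrange, ← hWrange]
    exact ⟨x, rfl⟩
  set Φ : (Fin t → K) →ₗ[K] (Fin t → K) :=
    (LinearEquiv.ofInjective ΘV hΘVinj).symm.toLinearMap.comp
      (ΘW.codRestrict (LinearMap.range ΘV) hmem) with hΦdef
  have hΦ : ∀ x, ΘV (Φ x) = ΘW x := by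
    intro x
    have h1 : (LinearEquiv.ofInjective ΘV hΘVinj) (Φ x)
        = ΘW.codRestrict (LinearMap.range ΘV) hmem x := by
      rw [hΦdef]
      exact (LinearEquiv.ofInjective ΘV hΘVinj).apply_symm_apply _
    have h2 := congrArg Subtype.val h1
    rw [LinearEquiv.ofInjective_apply] at h2
    rw [h2]
    rfl
  -- coordinate match of the last columns
  have hmatch : ∀ x i, Wm x i lastIdx = Vm (Φ x) i lastIdx := by
    intro x i
    exact (congrFun (hΦ x) i).symm
  -- B and memberships
  set B : Finset (Fin n) := (R.erase iW).erase iV with hB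
  have hBW : ∀ i ∈ B, i ∈ R.erase iW := fun i hi => Finset.mem_of_mem_erase hi
  have hBV : ∀ i ∈ B, i ∈ R.erase iV := by
    intro i hi
    rw [Finset.mem_erase] at hi ⊢
    rw [Finset.mem_erase] at hi
    exact ⟨hi.1, hi.2.2⟩
  have hBR : ∀ i ∈ B, i ∈ R := fun i hi => Finset.mem_of_mem_erase (hBW i hi)
  have hiVW : iV ∈ R.erase iW := Finset.mem_erase.mpr ⟨(Ne.symm hne), hiVR⟩
  have hiWV : iW ∈ R.erase iV := Finset.mem_erase.mpr ⟨hne, hiWR⟩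
  have hBcard : B.card = k + t - 2 := by
    rw [hB, Finset.card_erase_of_mem hiVW, Finset.card_erase_of_mem hiWR, hR]
    omega
  -- the f-transfer on B
  set rr : Fin n → K := fun i => u i lastIdx * (v i lastIdx)⁻¹ with hrr
  have hfmatch : ∀ i ∈ B, ∀ x, fV i (Φ x) = rr i * fW i x := by
    intro i hi x
    have h1 := hmatch x i
    rw [hWline i (hBW i hi), hVline i (hBV i hi)] at h1
    have h2 : fW i x * u i lastIdx = fV i (Φ x) * v i lastIdx := h1
    have h3 := hvlast i (hBV i hi)
    have h4 : rr i = u i lastIdx * (v i lastIdx)⁻¹ := rfl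
    apply mul_right_cancel₀ h3
    rw [← h2, h4]
    field_simp
  -- the difference scheme
  set Zm : (Fin t → K) →ₗ[K] Matrix (Fin n) (Fin t) K := Wm - Vm.comp Φ with hZm
  have hZval : ∀ x i, Zm x i = Wm x i - Vm (Φ x) i := by
    intro x i
    rw [hZm]
    rfl
  have hZdual : ∀ x, PiggyDual G P (Zm x) := by
    intro x
    rw [← mem_dualSub (G := G) (P := P)]
    have h1 : Zm x = Wm x - Vm (Φ x) := by rw [hZm]; rfl
    rw [h1]
    apply Submodule.sub_mem
    · exact mem_dualSub.mpr (hWmdual x)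
    · exact mem_dualSub.mpr (hVmdual (Φ x))
  have hZsupp : ∀ x, ∀ i, i ∉ R → Zm x i = 0 := by
    intro x i hi
    rw [hZval, hWmsupp x i hi, hVmsupp (Φ x) i hi, sub_zero]
  set ubar : Fin n → Fin t → K := fun i => u i - rr i • v i with hubar
  have hZrow : ∀ i ∈ B, ∀ x, Zm x i = fW i x • ubar i := by
    intro i hi x
    rw [hZval, hWline i (hBW i hi), hVline i (hBV i hi), hfmatch i hi x]
    show fW i x • u i - (rr i * fW i x) • v i = fW i x • (u i - rr i • v i)
    rw [smul_sub, smul_smul, mul_comm (rr i) (fW i x)]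
  have hZlast : ∀ x i, Zm x i lastIdx = 0 := by
    intro x i
    rw [hZval]
    show Wm x i lastIdx - Vm (Φ x) i lastIdx = 0
    rw [hmatch x i, sub_self]
  have hZiW : ∀ x, Zm x iW = x - fV iW (Φ x) • v iW := by
    intro x
    rw [hZval, hWrow, hVline iW hiWV]
  have hfViW : ∀ x, fV iW (Φ x) * v iW lastIdx = x lastIdx := by
    intro x
    have h1 := hZlast x iW
    rw [hZiW] at h1
    have h2 : x lastIdx - fV iW (Φ x) * v iW lastIdx = 0 := h1
    exact (sub_eq_zero.mp h2).symm
  -- Lemma-A based counting of nonzero coefficients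
  have hfcount : ∀ x : Fin t → K, x ≠ 0 →
      k ≤ ((R.erase iW).filter (fun i => fW i x ≠ 0)).card := by
    intro x hx
    have hM0 : Wm x ≠ 0 := by
      intro hc
      apply hx
      rw [← hWrow x, hc]
      rfl
    have h1 := dual_row_weight G P hkn hMDS (hWmdual x) hM0
    have hsub2 : (Finset.univ.filter fun i => Wm x i ≠ 0)
        ⊆ insert iW ((R.erase iW).filter (fun i => fW i x ≠ 0)) := by
      intro i hi
      rw [Finset.mem_filter] at hi
      rcases eq_or_ne i iW with h | h
      · rw [h]; exact Finset.mem_insert_self _ _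
      · have hiR : i ∈ R := by
          by_contra hc
          exact hi.2 (hWmsupp x i hc)
        have hiRe : i ∈ R.erase iW := Finset.mem_erase.mpr ⟨h, hiR⟩
        apply Finset.mem_insert_of_mem
        rw [Finset.mem_filter]
        refine ⟨hiRe, ?_⟩
        intro hf
        apply hi.2
        rw [hWline i hiRe x, hf, zero_smul]
    have h2 := Finset.card_le_card hsub2
    have h3 := Finset.card_insert_le iW ((R.erase iW).filter (fun i => fW i x ≠ 0))
    omega
  have hfexact : ∀ (A : Finset (Fin n)), A ⊆ R.erase iW → A.card = t - 1 →
      ∀ x : Fin t → K, x ≠ 0 → (∀ i ∈ A, fW i x = 0) →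
      ∀ i ∈ R.erase iW, i ∉ A → fW i x ≠ 0 := by
    intro A hAsub hAcard x hx hA0 i hi hiA
    have h1 := hfcount x hx
    have hsub2 : (R.erase iW).filter (fun i => fW i x ≠ 0) ⊆ (R.erase iW) \ A := by
      intro i' hi'
      rw [Finset.mem_filter] at hi'
      rw [Finset.mem_sdiff]
      refine ⟨hi'.1, ?_⟩
      intro hiA'
      exact hi'.2 (hA0 i' hiA')
    have hcard2 : ((R.erase iW) \ A).card = k := by
      rw [Finset.card_sdiff_of_subset hAsub, Finset.card_erase_of_mem hiWR, hR, hAcard]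
      omega
    have heq : (R.erase iW).filter (fun i => fW i x ≠ 0) = (R.erase iW) \ A := by
      apply Finset.eq_of_subset_of_card_le hsub2
      rw [hcard2]
      exact h1
    have hmem2 : i ∈ (R.erase iW).filter (fun i => fW i x ≠ 0) := by
      rw [heq, Finset.mem_sdiff]
      exact ⟨hi, hiA⟩
    rw [Finset.mem_filter] at hmem2
    exact hmem2.2
  -- case split on whether some modified line vanishes
  by_cases hcase : ∀ i ∈ B, ubar i ≠ 0
  · -- CASE 2 : all modified lines nonzero
    have hZinj : Function.Injective Zm := by
      rw [← LinearMap.ker_eq_bot, LinearMap.ker_eq_bot']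
      intro x hxZ
      by_contra hx
      have h1 := hfcount x hx
      have h2 : 1 < ((R.erase iW).filter (fun i => fW i x ≠ 0)).card := by omega
      obtain ⟨i, hiS, hiV⟩ := Finset.exists_mem_ne h2 iV
      rw [Finset.mem_filter] at hiS
      have hiB : i ∈ B := Finset.mem_erase.mpr ⟨hiV, hiS.1⟩
      have h3 : Zm x i = fW i x • ubar i := hZrow i hiB x
      have h4 : Zm x i = 0 := by rw [hxZ]; rfl
      rw [h4] at h3
      exact (smul_ne_zero hiS.2 (hcase i hiB)) h3.symm
    have hBeq : R \ ({iW, iV} : Finset (Fin n)) = B := by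
      have hcomm : (R.erase iV).erase iW = (R.erase iW).erase iV := by
        ext i
        simp only [Finset.mem_erase]
        exact ⟨fun ⟨h1, h2, h3⟩ => ⟨h2, h1, h3⟩, fun ⟨h1, h2, h3⟩ => ⟨h2, h1, h3⟩⟩
      rw [Finset.sdiff_insert, heraseV, hcomm, hB]
    have hIcard : ({iW, iV} : Finset (Fin n)).card = 2 := by
      rw [Finset.card_insert_of_notMem (by simpa using hne), Finset.card_singleton]
    obtain ⟨mZ, hZu, hZtop, hZminj⟩ :=
      structure_lemma (t := t) (by omega) G hMDS P R {iW, iV}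
        (by
          intro i hi
          simp only [Finset.mem_insert, Finset.mem_singleton] at hi
          rcases hi with h | h
          · rw [h]; exact hiWR
          · rw [h]; exact hiVR) hR
        (by rw [hIcard]; omega) Zm hZdual hZsupp hZinj ubar fW
        (by intro i hi; rw [hBeq] at hi; exact hcase i hi)
        (by intro i hi; rw [hBeq] at hi; exact hZrow i hi)
    have hmZlast : mZ ≠ lastIdx := by
      intro hc
      have h1 := hZminj (Pi.single lastIdx 1) (fun i => by rw [hc]; exact hZlast _ i)
      have h2 := congrFun h1 lastIdx
      rw [Pi.single_eq_same] at h2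
      exact one_ne_zero h2
    -- the kernel property of column mZ of Zm
    have hΘ'ker : ∀ x, G *ᵥ (fun i => Zm x i mZ) = 0 := by
      intro x
      have h1 := hZdual x mZ
      have h2 : ∑ j ∈ Finset.Ioi mZ, P mZ j *ᵥ (fun r => Zm x r j) = 0 := by
        apply Finset.sum_eq_zero
        intro j hj
        have hj' : mZ < j := Finset.mem_Ioi.mp hj
        have hcol : (fun r => Zm x r j) = (0 : Fin n → K) := by
          funext r
          exact hZtop x j hj' r
        rw [hcol, Matrix.mulVec_zero]
      rw [h2, add_zero] at h1
      exact h1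
    set d : Fin n → K := fun i => ubar i mZ * (u i lastIdx)⁻¹ with hd
    have hc'eq : ∀ i ∈ B, ∀ x, Zm x i mZ = d i * (Wm x i lastIdx) := by
      intro i hi x
      rw [hZrow i hi x, hWline i (hBW i hi) x]
      show fW i x * ubar i mZ = ubar i mZ * (u i lastIdx)⁻¹ * (fW i x * u i lastIdx)
      have h3 := hulast i (hBW i hi)
      field_simp
    -- pairwise equality of the ratios d
    have hdpair : ∀ i1 ∈ B, ∀ i2 ∈ B, d i1 = d i2 := by
      intro i1 hi1 i2 hi2
      rcases eq_or_ne i1 i2 with heq12 | hne12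
      · rw [heq12]
      have hcard3 : t - 1 ≤ ((B.erase i1).erase i2).card := by
        have e1 : B.card - 1 ≤ (B.erase i1).card := Finset.pred_card_le_card_erase
        have e2 : (B.erase i1).card - 1 ≤ ((B.erase i1).erase i2).card :=
          Finset.pred_card_le_card_erase
        omega
      obtain ⟨T, hTsub, hTcard⟩ := Finset.exists_subset_card_eq hcard3
      obtain ⟨x, hx0, hxT⟩ := exists_kernel_vec (by omega) T hTcard fW
      have hTB : T ⊆ B := fun i hi =>
        Finset.mem_of_mem_erase (Finset.mem_of_mem_erase (hTsub hi))
      have hTsubW : T ⊆ R.erase iW := fun i hi => hBW _ (hTB hi)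
      have hi1T : i1 ∉ T := by
        intro h
        exact (Finset.mem_erase.mp (Finset.mem_of_mem_erase (hTsub h))).1 rfl
      have hi2T : i2 ∉ T := by
        intro h
        exact (Finset.mem_erase.mp (hTsub h)).1 rfl
      have hcne : ΘW x ≠ 0 := by
        intro hc
        exact hx0 (hmWinj x (fun i => congrFun hc i))
      have hfull2 : ∀ i ∈ R, i ∉ T → Wm x i lastIdx ≠ 0 := by
        have h1 := mds_ker_weight hkn hMDS (hΘWker x) hcne
        have hsub2 : (Finset.univ.filter fun i => ΘW x i ≠ 0) ⊆ R \ T := by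
          intro i hi
          rw [Finset.mem_filter] at hi
          rw [Finset.mem_sdiff]
          constructor
          · by_contra hc
            apply hi.2
            show Wm x i lastIdx = 0
            rw [hWmsupp x i hc]
            rfl
          · intro hiT
            apply hi.2
            show Wm x i lastIdx = 0
            rw [hWline i (hTsubW hiT) x]
            show fW i x * u i lastIdx = 0
            rw [hxT i hiT, zero_mul]
        have hTsubR : T ⊆ R := fun i hi => hBR i (hTB hi)
        have hcards : (R \ T).card = k + 1 := by
          rw [Finset.card_sdiff_of_subset hTsubR, hR, hTcard]
          omega
        have heq2 : (Finset.univ.filter fun i => ΘW x i ≠ 0) = R \ T := by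
          apply Finset.eq_of_subset_of_card_le hsub2
          rw [hcards]
          exact h1
        intro i hiR hiT
        have hmem3 : i ∈ Finset.univ.filter fun i => ΘW x i ≠ 0 := by
          rw [heq2, Finset.mem_sdiff]
          exact ⟨hiR, hiT⟩
        rw [Finset.mem_filter] at hmem3
        exact hmem3.2
      set a1 := Wm x i1 lastIdx with ha1def
      set b1 := Zm x i1 mZ with hb1def
      set cc : Fin n → K := fun i => a1 * Zm x i mZ - b1 * Wm x i lastIdx with hcc
      have hccker : G *ᵥ cc = 0 := by
        have e1 : cc = a1 • (fun i => Zm x i mZ) - b1 • (fun i => Wm x i lastIdx) := by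
          funext i
          show a1 * Zm x i mZ - b1 * Wm x i lastIdx = a1 * Zm x i mZ - b1 * Wm x i lastIdx
          rfl
        rw [e1, Matrix.mulVec_sub, Matrix.mulVec_smul, Matrix.mulVec_smul, hΘ'ker x, hΘWker' x,
          smul_zero, smul_zero, sub_zero]
      have hcczero : cc = 0 := by
        by_contra hccne
        have h1 := mds_ker_weight hkn hMDS hccker hccne
        have hsub2 : (Finset.univ.filter fun i => cc i ≠ 0) ⊆ R \ insert i1 T := by
          intro i hi
          rw [Finset.mem_filter] at hi
          rw [Finset.mem_sdiff]
          constructor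
          · by_contra hc
            apply hi.2
            show a1 * Zm x i mZ - b1 * Wm x i lastIdx = 0
            have e2 : Zm x i = 0 := hZsupp x i hc
            have e3 : Wm x i = 0 := hWmsupp x i hc
            rw [show Zm x i mZ = 0 from by rw [e2]; rfl,
              show Wm x i lastIdx = 0 from by rw [e3]; rfl]
            ring
          · intro hins
            rcases Finset.mem_insert.mp hins with h | h
            · apply hi.2
              rw [h]
              show a1 * b1 - b1 * a1 = 0
              ring
            · apply hi.2
              show a1 * Zm x i mZ - b1 * Wm x i lastIdx = 0
              have e2 : Zm x i mZ = 0 := by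
                rw [hZrow i (hTB h) x]
                show fW i x * ubar i mZ = 0
                rw [hxT i h, zero_mul]
              have e3 : Wm x i lastIdx = 0 := by
                rw [hWline i (hTsubW h) x]
                show fW i x * u i lastIdx = 0
                rw [hxT i h, zero_mul]
              rw [e2, e3]
              ring
        have hinsR : insert i1 T ⊆ R := by
          intro i hi
          rcases Finset.mem_insert.mp hi with h | h
          · rw [h]; exact hBR i1 hi1
          · exact hBR i (hTB h)
        have hcards2 : (R \ insert i1 T).card = k := by
          rw [Finset.card_sdiff_of_subset hinsR, hR, Finset.card_insert_of_notMem hi1T, hTcard]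
          omega
        have h2 := Finset.card_le_card hsub2
        rw [hcards2] at h2
        omega
      have h5 := congrFun hcczero i2
      have h6 : a1 * Zm x i2 mZ - b1 * Wm x i2 lastIdx = 0 := h5
      rw [hc'eq i2 hi2 x] at h6
      have hb1eq : b1 = d i1 * a1 := hc'eq i1 hi1 x
      rw [hb1eq] at h6
      have ha1 : a1 ≠ 0 := hfull2 i1 (hBR i1 hi1) hi1T
      have hc2 : Wm x i2 lastIdx ≠ 0 := hfull2 i2 (hBR i2 hi2) hi2T
      have h7 : a1 * Wm x i2 lastIdx * (d i2 - d i1) = 0 := by linear_combination h6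
      rcases mul_eq_zero.mp h7 with h8 | h8
      · rcases mul_eq_zero.mp h8 with h9 | h9
        · exact absurd h9 ha1
        · exact absurd h9 hc2
      · exact (sub_eq_zero.mp h8).symm
    -- a distinguished element of B
    have hBne : B.Nonempty := by
      rw [← Finset.card_pos, hBcard]
      omega
    obtain ⟨i0, hi0⟩ := hBne
    set lam := d i0 with hlam
    have hfin : ∀ x : Fin t → K, (fun i => Zm x i mZ - lam * Wm x i lastIdx) = 0 := by
      intro x
      by_contra hne2
      have hker2 : G *ᵥ (fun i => Zm x i mZ - lam * Wm x i lastIdx) = 0 := by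
        have e1 : (fun i => Zm x i mZ - lam * Wm x i lastIdx)
            = (fun i => Zm x i mZ) - lam • (fun i => Wm x i lastIdx) := by
          funext i
          rfl
        rw [e1, Matrix.mulVec_sub, Matrix.mulVec_smul, hΘ'ker x, hΘWker' x, smul_zero, sub_zero]
      have h1 := mds_ker_weight hkn hMDS hker2 hne2
      have hsub2 : (Finset.univ.filter fun i => Zm x i mZ - lam * Wm x i lastIdx ≠ 0)
          ⊆ ({iW, iV} : Finset (Fin n)) := by
        intro i hi
        rw [Finset.mem_filter] at hi
        by_contra hc
        apply hi.2
        by_cases hiR : i ∈ R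
        · have hiB : i ∈ B := by
            rw [← hBeq, Finset.mem_sdiff]
            exact ⟨hiR, hc⟩
          rw [hc'eq i hiB x, hdpair i hiB i0 hi0]
          ring
        · have e2 : Zm x i = 0 := hZsupp x i hiR
          have e3 : Wm x i = 0 := hWmsupp x i hiR
          rw [show Zm x i mZ = 0 from by rw [e2]; rfl,
            show Wm x i lastIdx = 0 from by rw [e3]; rfl]
          ring
      have h2 := Finset.card_le_card hsub2
      rw [hIcard] at h2
      omega
    -- final contradiction at row iW
    set xs : Fin t → K := Pi.single mZ 1 with hxs
    have hxlast : xs lastIdx = 0 := Pi.single_eq_of_ne (Ne.symm hmZlast) 1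
    have hfv0 : fV iW (Φ xs) = 0 := by
      have h1 := hfViW xs
      rw [hxlast] at h1
      rcases mul_eq_zero.mp h1 with h | h
      · exact h
      · exact absurd h (hvlast iW hiWV)
    have hZval2 : Zm xs iW mZ = 1 := by
      rw [hZiW xs]
      show xs mZ - fV iW (Φ xs) * v iW mZ = 1
      rw [hfv0, hxs, Pi.single_eq_same]
      ring
    have hWval2 : Wm xs iW lastIdx = 0 := by
      rw [hWrow]
      exact hxlast
    have hcontr := congrFun (hfin xs) iW
    rw [hZval2, hWval2] at hcontr
    have : (1 : K) - lam * 0 = 0 := hcontr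
    rw [mul_zero, sub_zero] at this
    exact one_ne_zero this
  · -- CASE 1 : some modified line vanishes
    push_neg at hcase
    obtain ⟨i0, hi0B, hi0z⟩ := hcase
    have hall : ∀ i1 ∈ B, ubar i1 = 0 := by
      intro i1 hi1
      have hcard3 : t - 1 ≤ ((B.erase i0).erase i1).card := by
        have e1 : B.card - 1 ≤ (B.erase i0).card := Finset.pred_card_le_card_erase
        have e2 : (B.erase i0).card - 1 ≤ ((B.erase i0).erase i1).card :=
          Finset.pred_card_le_card_erase
        omega
      obtain ⟨A, hAsub, hAcard⟩ := Finset.exists_subset_card_eq hcard3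
      have hAB : A ⊆ B := fun i hi =>
        Finset.mem_of_mem_erase (Finset.mem_of_mem_erase (hAsub hi))
      have hAW : A ⊆ R.erase iW := fun i hi => hBW _ (hAB hi)
      have hi0A : i0 ∉ A := by
        intro h
        exact (Finset.mem_erase.mp (Finset.mem_of_mem_erase (hAsub h))).1 rfl
      have hi1A : i1 ∉ A := by
        intro h
        exact (Finset.mem_erase.mp (hAsub h)).1 rfl
      obtain ⟨x, hx0, hxA⟩ := exists_kernel_vec (by omega) A hAcard fW
      have hZx0 : Zm x = 0 := by
        by_contra hZne
        have h1 := dual_row_weight G P hkn hMDS (hZdual x) hZne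
        have hsub2 : (Finset.univ.filter fun i => Zm x i ≠ 0) ⊆ R \ insert i0 A := by
          intro i hi
          rw [Finset.mem_filter] at hi
          rw [Finset.mem_sdiff]
          constructor
          · by_contra hc
            exact hi.2 (hZsupp x i hc)
          · intro hins
            apply hi.2
            rcases Finset.mem_insert.mp hins with h | h
            · rw [h, hZrow i0 hi0B x, hi0z, smul_zero]
            · rw [hZrow i (hAB h) x, hxA i h, zero_smul]
        have hinsR : insert i0 A ⊆ R := by
          intro i hi
          rcases Finset.mem_insert.mp hi with h | h
          · rw [h]; exact hBR i0 hi0B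
          · exact hBR i (hAB h)
        have hcards2 : (R \ insert i0 A).card = k := by
          rw [Finset.card_sdiff_of_subset hinsR, hR, Finset.card_insert_of_notMem hi0A, hAcard]
          omega
        have h2 := Finset.card_le_card hsub2
        rw [hcards2] at h2
        omega
      have hf1 : fW i1 x ≠ 0 := hfexact A hAW hAcard x hx0 hxA i1 (hBW i1 hi1) hi1A
      have h2 : fW i1 x • ubar i1 = 0 := by
        rw [← hZrow i1 hi1 x, hZx0]
        rfl
      rcases smul_eq_zero.mp h2 with h | h
      · exact absurd h hf1
      · exact h
    have hZall : ∀ x, Zm x = 0 := by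
      intro x
      by_contra hZne
      have h1 := dual_row_weight G P hkn hMDS (hZdual x) hZne
      have hsub2 : (Finset.univ.filter fun i => Zm x i ≠ 0) ⊆ ({iW, iV} : Finset (Fin n)) := by
        intro i hi
        rw [Finset.mem_filter] at hi
        by_contra hc
        apply hi.2
        by_cases hiR : i ∈ R
        · have hiB : i ∈ B := by
            rw [hB, Finset.mem_erase, Finset.mem_erase]
            simp only [Finset.mem_insert, Finset.mem_singleton, not_or] at hc
            exact ⟨hc.2, hc.1, hiR⟩
          rw [hZrow i hiB x, hall i hiB, smul_zero]
        · exact hZsupp x i hiR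
      have h2 := Finset.card_le_card hsub2
      have hIcard : ({iW, iV} : Finset (Fin n)).card = 2 := by
        rw [Finset.card_insert_of_notMem (by simpa using hne), Finset.card_singleton]
      rw [hIcard] at h2
      omega
    have hxeq : ∀ x : Fin t → K, x = fV iW (Φ x) • v iW := by
      intro x
      have h1 : Zm x iW = 0 := by rw [hZall x]; rfl
      rw [hZiW x] at h1
      exact sub_eq_zero.mp h1
    set j1 : Fin t := ⟨0, by omega⟩ with hj1def
    have hj1 : j1 ≠ lastIdx := by
      intro hc
      have h1 : (j1 : ℕ) = (lastIdx : ℕ) := congrArg Fin.val hc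
      have h2 : (j1 : ℕ) = 0 := rfl
      have h3 : (lastIdx : ℕ) = t - 1 := rfl
      omega
    have e1 := hxeq (Pi.single j1 1)
    have e2 := hxeq (Pi.single lastIdx 1)
    have q1 : (1 : K) = fV iW (Φ (Pi.single j1 1)) * v iW j1 := by
      have h1 := congrFun e1 j1
      rw [Pi.single_eq_same] at h1
      exact h1
    have q2 : (0 : K) = fV iW (Φ (Pi.single lastIdx 1)) * v iW j1 := by
      have h1 := congrFun e2 j1
      rw [Pi.single_eq_of_ne hj1] at h1
      exact h1
    have q3 : (1 : K) = fV iW (Φ (Pi.single lastIdx 1)) * v iW lastIdx := by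
      have h1 := congrFun e2 lastIdx
      rw [Pi.single_eq_same] at h1
      exact h1
    have h4 : fV iW (Φ (Pi.single lastIdx 1)) ≠ 0 := by
      intro hc
      rw [hc, zero_mul] at q3
      exact one_ne_zero q3
    have h5 : v iW j1 = 0 := by
      rcases mul_eq_zero.mp q2.symm with h | h
      · exact absurd h h4
      · exact h
    rw [h5, mul_zero] at q1
    exact one_ne_zero q1


end Piggy

/-- for `k ≥ 3`, no `(n,k)` piggybacking code with `t` substripes can
have two bandwidth-`(k+t-1)` linear repair schemes for two distinct failed nodes
whose repair matrices have the same set `R` of `k+t` nonzero rows. -/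
theorem no_two_schemes_same_support {n t k : ℕ} (K : Type*) [Field K] [Fintype K]
    (hk : 3 ≤ k) (ht : 2 ≤ t)
    (G : Matrix (Fin k) (Fin n) K) (hMDS : IsMDS G)
    (P : Fin t → Fin t → Matrix (Fin k) (Fin n) K)
    (iW iV : Fin n) (hne : iW ≠ iV)
    (R : Finset (Fin n)) (hR : R.card = k + t) (hiWR : iW ∈ R) (hiVR : iV ∈ R)
    (W V : Fin t → Matrix (Fin n) (Fin t) K)
    (hWdual : ∀ j, PiggyDual G P (W j))
    (hVdual : ∀ j, PiggyDual G P (V j))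
    (hWsupp : ∀ i : Fin n, (∃ j, W j i ≠ 0) ↔ i ∈ R)
    (hVsupp : ∀ i : Fin n, (∃ j, V j i ≠ 0) ↔ i ∈ R)
    (hWfull : Module.finrank K (Submodule.span K (Set.range fun j => W j iW)) = t)
    (hVfull : Module.finrank K (Submodule.span K (Set.range fun j => V j iV)) = t)
    (hWbw : ∑ i ∈ R.erase iW,
      Module.finrank K (Submodule.span K (Set.range fun j => W j i)) ≤ k + t - 1)
    (hVbw : ∑ i ∈ R.erase iV,
      Module.finrank K (Submodule.span K (Set.range fun j => V j i)) ≤ k + t - 1) :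
    False := by
  classical
  exact Piggy.main_false hk ht G hMDS P iW iV hne R hR hiWR hiVR W V hWdual hVdual
    hWsupp hVsupp hWfull hVfull hWbw hVbw
end

section
/- Let F ∈ F_q^{2×n} generate an MDS code (any 2 columns independent), let 2 ≤ t ≤ n−2, and suppose q is large enough that n·C(n−1, t+1)·(1 − ∏_{i=1}^{t−1}(1 − q^{−i})) < 1. Then there exist piggybacking matrices P^{(0)},…,P^{(t−2)} ∈ F_q^{2×n} such that the resulting linebacking code with t substripes admits, for every failed node i* and every repair set S of size t+1 avoiding i*, a linear repair scheme of bandwidth t+1 (perfect bandwidth). -/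
open Matrix

/-- Membership in the dual of the linebacking code with base generator `G`,
piggybacking matrices `P i` (used for `i` different from the last index `last`). -/
def LineDual {n t k : ℕ} {K : Type*} [Field K] [Fintype K]
    (G : Matrix (Fin k) (Fin n) K) (P : Fin t → Matrix (Fin k) (Fin n) K)
    (last : Fin t) (W : Matrix (Fin n) (Fin t) K) : Prop :=
  G *ᵥ (fun r => W r last) = 0 ∧
  ∀ i : Fin t, i ≠ last →
    G *ᵥ (fun r => W r i) + (P i) *ᵥ (fun r => W r last) = 0

namespace LBWork
variable {n t : ℕ} {K : Type*} [Field K]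

def sg (x z : Fin n → K) (w i : Fin n) : K := -(x w * (z i - z w))⁻¹
def ta (x z : Fin n → K) (w i : Fin n) : K := (x i * (z i - z w))⁻¹
def cv (t : ℕ) (x z : Fin n → K) (i : Fin n) (c : Fin t) : K :=
  if (c : ℕ) = t - 1 then 0 else x i * z i ^ ((c : ℕ) + 3)
def el {K : Type*} [Field K] {t : ℕ} (c : Fin t) : K := if (c : ℕ) = t - 1 then 1 else 0
def mv (x z : Fin n → K) (w i : Fin n) (c : Fin t) : K :=
  ta x z w i * (el c - sg x z w i * cv t x z w c - ta x z w i * cv t x z i c)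
def rv (x z : Fin n → K) (w i : Fin n) (c : Fin t) : K :=
  sg x z w i * (ta x z w i * cv t x z i c + sg x z w i * cv t x z w c - el c)

lemma rv_last {lst : Fin t} (hl : (lst : ℕ) = t - 1) (x z : Fin n → K) (w i : Fin n) :
    rv x z w i lst = -sg x z w i := by
  simp [rv, cv, el, hl]

lemma indep (ht : 2 ≤ t) (x z : Fin n → K) (w : Fin n) (e : Fin (t+1) → Fin n)
    (hxw : x w ≠ 0) (hxk : ∀ k, x (e k) ≠ 0)
    (hd : ∀ k, z (e k) - z w ≠ 0)
    (hdist : ∀ k l, k ≠ l → z (e k) ≠ z (e l)) :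
    LinearIndependent K
      (fun j : Fin t => (fun c => rv x z w (e 0) c - rv x z w (e j.succ) c : Fin t → K)) := by
  have ht1 : t - 1 < t := by omega
  set lst : Fin t := ⟨t - 1, ht1⟩ with hlst
  have hl : (lst : ℕ) = t - 1 := rfl
  rw [Fintype.linearIndependent_iff]
  intro γ hsum j0
  set d : Fin (t+1) → K := fun k => z (e k) - z w with hdd
  set Gc : Fin (t+1) → K := fun k => Fin.cases (∑ j, γ j) (fun j => -γ j) k with hGc
  have hGc0 : Gc 0 = ∑ j, γ j := rfl
  have hGcs : ∀ j, Gc j.succ = -γ j := fun j => rfl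
  -- the summed dual relations
  have hsum' : ∀ c : Fin t, ∑ k, Gc k * rv x z w (e k) c = 0 := by
    intro c
    have h0 : ∑ j : Fin t, γ j * (rv x z w (e 0) c - rv x z w (e j.succ) c) = 0 := by
      have := congrFun hsum c
      simpa [Finset.sum_apply] using this
    rw [Fin.sum_univ_succ]
    simp only [hGc0, hGcs]
    calc (∑ j, γ j) * rv x z w (e 0) c + ∑ j : Fin t, -γ j * rv x z w (e (Fin.succ j)) c
        = ∑ j : Fin t, γ j * (rv x z w (e 0) c - rv x z w (e j.succ) c) := by
          rw [Finset.sum_mul, ← Finset.sum_add_distrib]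
          exact Finset.sum_congr rfl fun j _ => by ring
      _ = 0 := h0
  -- basic sum facts
  have hB : ∑ k, Gc k = 0 := by
    rw [Fin.sum_univ_succ]
    simp only [hGc0, hGcs]
    simp [Finset.sum_neg_distrib]
  have hA : ∑ k, Gc k * (d k)⁻¹ = 0 := by
    have h1 := hsum' lst
    have h2 : ∀ k, Gc k * rv x z w (e k) lst = Gc k * (x w * d k)⁻¹ := by
      intro k
      rw [rv_last hl]
      simp only [sg, hdd]
      ring
    rw [Finset.sum_congr rfl (fun k _ => h2 k)] at h1
    have h3 : ∀ k, Gc k * (d k)⁻¹ = x w * (Gc k * (x w * d k)⁻¹) := by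
      intro k
      have hdk : d k ≠ 0 := hd k
      field_simp
    rw [Finset.sum_congr rfl (fun k _ => h3 k), ← Finset.mul_sum, h1, mul_zero]
  -- nodes and kernel vector
  set ν : Fin (t+2) → K := fun l => Fin.lastCases (z w) (fun k => z (e k)) l with hν
  set E : Fin (t+2) → K :=
    fun l => Fin.lastCases (-∑ k, Gc k * ((d k)⁻¹)^2) (fun k => Gc k * ((d k)⁻¹)^2) l with hE
  have hνc : ∀ k : Fin (t+1), ν k.castSucc = z (e k) := fun k => by
    simp [hν, Fin.lastCases_castSucc]
  have hνl : ν (Fin.last (t+1)) = z w := by simp [hν]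
  have hEc : ∀ k : Fin (t+1), E k.castSucc = Gc k * ((d k)⁻¹)^2 := fun k => by
    simp [hE, Fin.lastCases_castSucc]
  have hEl : E (Fin.last (t+1)) = -∑ k, Gc k * ((d k)⁻¹)^2 := by simp [hE]
  have hEsum : ∀ M : Fin (t+2), ∑ l, E l * ν l ^ (M : ℕ) = 0 := by
    intro M
    rw [Fin.sum_univ_castSucc]
    simp only [hEc, hEl, hνc, hνl]
    have hsplit : ∑ k : Fin (t+1), Gc k * ((d k)⁻¹)^2 * z (e k) ^ (M:ℕ)
        + (-∑ k, Gc k * ((d k)⁻¹)^2) * z w ^ (M:ℕ)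
        = ∑ k : Fin (t+1), Gc k * ((d k)⁻¹)^2 * (z (e k) ^ (M:ℕ) - z w ^ (M:ℕ)) := by
      rw [neg_mul, Finset.sum_mul, ← sub_eq_add_neg, ← Finset.sum_sub_distrib]
      exact Finset.sum_congr rfl fun k _ => by ring
    rw [hsplit]
    rcases Nat.lt_or_ge (M : ℕ) 3 with hM3 | hM3
    · have hM012 : (M : ℕ) = 0 ∨ (M : ℕ) = 1 ∨ (M : ℕ) = 2 := by omega
      rcases hM012 with hMv | hMv | hMv <;> rw [hMv]
      · simp
      · -- M = 1
        calc ∑ k : Fin (t+1), Gc k * ((d k)⁻¹)^2 * (z (e k) ^ 1 - z w ^ 1)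
            = ∑ k, Gc k * (d k)⁻¹ := by
              refine Finset.sum_congr rfl fun k _ => ?_
              have hdk : d k ≠ 0 := hd k
              have hzk : z (e k) = z w + d k := by rw [hdd]; ring
              rw [hzk]
              field_simp
              ring
          _ = 0 := hA
      · -- M = 2
        calc ∑ k : Fin (t+1), Gc k * ((d k)⁻¹)^2 * (z (e k) ^ 2 - z w ^ 2)
            = ∑ k, (Gc k + (2 * z w) * (Gc k * (d k)⁻¹)) := by
              refine Finset.sum_congr rfl fun k _ => ?_
              have hdk : d k ≠ 0 := hd k
              have hzk : z (e k) = z w + d k := by rw [hdd]; ring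
              rw [hzk]
              field_simp
              ring
          _ = ∑ k, Gc k + (2 * z w) * ∑ k, Gc k * (d k)⁻¹ := by
              rw [Finset.sum_add_distrib, Finset.mul_sum]
          _ = 0 := by rw [hA, hB]; ring
    · -- M ≥ 3
      have hMt : (M : ℕ) < t + 2 := M.isLt
      set c : Fin t := ⟨(M : ℕ) - 3, by omega⟩ with hc
      have hcne : (c : ℕ) ≠ t - 1 := by simp only [hc]; omega
      have hcM : (c : ℕ) + 3 = (M : ℕ) := by simp only [hc]; omega
      have h1 := hsum' c
      have h2 : ∀ k, Gc k * ((d k)⁻¹)^2 * (z (e k) ^ (M:ℕ) - z w ^ (M:ℕ))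
          = (-x w) * (Gc k * rv x z w (e k) c) := by
        intro k
        have hdk : d k ≠ 0 := hd k
        have hdk' : d k = z (e k) - z w := by rw [hdd]
        simp only [rv, sg, ta, cv, el, if_neg hcne, hcM, ← hdk']
        have h4 : x (e k) * d k ≠ 0 := mul_ne_zero (hxk k) hdk
        have h5 : x w * d k ≠ 0 := mul_ne_zero hxw hdk
        have h6 : x (e k) ≠ 0 := hxk k
        field_simp
        ring
      rw [Finset.sum_congr rfl (fun k _ => h2 k), ← Finset.mul_sum, h1, mul_zero]
  -- invert the Vandermonde system
  have hνinj : Function.Injective ν := by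
    intro a b hab
    induction a using Fin.lastCases with
    | last =>
      induction b using Fin.lastCases with
      | last => rfl
      | cast k =>
        exfalso
        apply hd k
        rw [hνl, hνc] at hab
        rw [← hab, sub_self]
    | cast k =>
      induction b using Fin.lastCases with
      | last =>
        exfalso
        apply hd k
        rw [hνl, hνc] at hab
        rw [hab, sub_self]
      | cast l =>
        rw [hνc, hνc] at hab
        by_cases hkl : k = l
        · rw [hkl]
        · exact absurd hab (hdist k l hkl)
  have hdet : (Matrix.vandermonde ν).det ≠ 0 := by
    rw [Matrix.det_vandermonde]
    refine Finset.prod_ne_zero_iff.mpr fun i _ => Finset.prod_ne_zero_iff.mpr fun j hj => ?_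
    exact sub_ne_zero.mpr fun hcon => (Finset.mem_Ioi.mp hj).ne' (hνinj hcon)
  have hvm : Matrix.vecMul E (Matrix.vandermonde ν) = 0 := by
    funext M
    simpa [Matrix.vecMul, dotProduct, Matrix.vandermonde_apply] using hEsum M
  have hE0 : E = 0 := by
    have hinvd := Matrix.invertibleOfIsUnitDet (Matrix.vandermonde ν) (isUnit_iff_ne_zero.mpr hdet)
    have h1 : E ᵥ* ((Matrix.vandermonde ν) * ⅟(Matrix.vandermonde ν)) = E := by
      rw [mul_invOf_self, Matrix.vecMul_one]
    rw [← Matrix.vecMul_vecMul, hvm, Matrix.zero_vecMul] at h1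
    exact h1.symm
  have hGck : Gc j0.succ = 0 := by
    have h1 : E (Fin.castSucc j0.succ) = 0 := by rw [hE0]; rfl
    rw [hEc] at h1
    rcases mul_eq_zero.mp h1 with h | h
    · exact h
    · exact absurd h (pow_ne_zero 2 (inv_ne_zero (hd j0.succ)))
  have h9 := (hGcs j0).symm.trans hGck
  exact neg_eq_zero.mp h9

def Pdef (t : ℕ) (x z : Fin n → K) (u : Fin 2 → K) : Fin t → Matrix (Fin 2) (Fin n) K :=
  fun c => fun r i => x i * z i ^ ((c : ℕ) + 3) * u r

lemma mv_last {lst : Fin t} (hl : (lst : ℕ) = t - 1) (x z : Fin n → K) (w i : Fin n) :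
    mv x z w i lst = ta x z w i := by
  simp [mv, cv, el, hl]

lemma key {lst : Fin t} (hl : (lst : ℕ) = t - 1) (x z : Fin n → K) (u f : Fin 2 → K) (w i : Fin n)
    (hxw : x w ≠ 0) (hxi : x i ≠ 0) (hzz : z i - z w ≠ 0)
    (G : Matrix (Fin 2) (Fin n) K) (hG : ∀ ρ j, G ρ j = x j * f ρ + x j * z j * u ρ)
    (ρ : Fin 2) (c : Fin t) :
    G ρ i * mv x z w i c
      + mv x z w i lst * (if (c : ℕ) = t - 1 then 0 else x i * z i ^ ((c : ℕ) + 3) * u ρ)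
    = G ρ w * rv x z w i c
      + rv x z w i lst * (if (c : ℕ) = t - 1 then 0 else x w * z w ^ ((c : ℕ) + 3) * u ρ)
      + (if (c : ℕ) = t - 1 then u ρ else 0) := by
  have h1 : x i * (z i - z w) ≠ 0 := mul_ne_zero hxi hzz
  have h2 : x w * (z i - z w) ≠ 0 := mul_ne_zero hxw hzz
  rw [mv_last hl, rv_last hl]
  by_cases hc : (c : ℕ) = t - 1
  · simp only [mv, rv, cv, el, sg, ta, hG, if_pos hc]
    field_simp
    ring
  · simp only [mv, rv, cv, el, sg, ta, hG, if_neg hc]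
    field_simp
    ring

lemma scheme [Fintype K] (ht : 2 ≤ t) (x z : Fin n → K) (u f : Fin 2 → K)
    (hx : ∀ i, x i ≠ 0) (hz : Function.Injective z)
    (G : Matrix (Fin 2) (Fin n) K)
    (hG : ∀ ρ i, G ρ i = x i * f ρ + x i * z i * u ρ)
    (istar : Fin n) (S : Finset (Fin n)) (hS : S.card = t + 1) (hw : istar ∉ S) :
    ∃ W : Fin t → Matrix (Fin n) (Fin t) K,
      (∀ j, LineDual G (Pdef t x z u) ⟨t - 1, by omega⟩ (W j)) ∧
      (∀ (j) (i : Fin n), i ∉ S → i ≠ istar → W j i = 0) ∧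
      Module.finrank K (Submodule.span K (Set.range fun j => W j istar)) = t ∧
      (∀ i ∈ S, Module.finrank K (Submodule.span K (Set.range fun j => W j i)) = 1) := by
  have ht1 : t - 1 < t := by omega
  set lst : Fin t := ⟨t - 1, ht1⟩ with hlst
  have hl : (lst : ℕ) = t - 1 := rfl
  set e : Fin (t + 1) → Fin n := fun k => ((Finset.equivFinOfCardEq hS).symm k : Fin n) with he
  have heS : ∀ k, e k ∈ S := fun k => ((Finset.equivFinOfCardEq hS).symm k).2
  have heinj : Function.Injective e := by
    intro a b hab
    exact (Finset.equivFinOfCardEq hS).symm.injective (Subtype.ext hab)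
  have hew : ∀ k, e k ≠ istar := fun k h => hw (h ▸ heS k)
  have hdk : ∀ k, z (e k) - z istar ≠ 0 :=
    fun k => sub_ne_zero.mpr (fun h => hew k (hz h))
  have hdist : ∀ k l, k ≠ l → z (e k) ≠ z (e l) :=
    fun k l hkl h => hkl (heinj (hz h))
  have hmne : ∀ k, (fun c => mv x z istar (e k) c) ≠ (0 : Fin t → K) := by
    intro k h
    have h2 := congrFun h lst
    rw [mv_last hl] at h2
    exact inv_ne_zero (mul_ne_zero (hx (e k)) (hdk k)) h2
  set W : Fin t → Matrix (Fin n) (Fin t) K := fun j i c =>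
    (if i = istar then rv x z istar (e 0) c - rv x z istar (e j.succ) c else 0)
    + (if i = e 0 then -(mv x z istar (e 0) c) else 0)
    + (if i = e j.succ then mv x z istar (e j.succ) c else 0) with hW
  refine ⟨W, ?_, ?_, ?_, ?_⟩
  · -- LineDual
    intro j
    have hsum : ∀ (A : Fin n → K) (c : Fin t), ∑ i, A i * W j i c
        = A istar * (rv x z istar (e 0) c - rv x z istar (e j.succ) c)
          + A (e 0) * -(mv x z istar (e 0) c)
          + A (e j.succ) * (mv x z istar (e j.succ) c) := by
      intro A c
      simp only [hW, mul_add, Finset.sum_add_distrib, mul_ite, mul_zero,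
        Finset.sum_ite_eq', Finset.mem_univ, if_true]
    have hk0 := key hl x z u f istar (e 0) (hx istar) (hx (e 0)) (hdk 0) G hG
    have hkJ := key hl x z u f istar (e j.succ) (hx istar) (hx (e j.succ)) (hdk j.succ) G hG
    constructor
    · funext ρ
      have h0 := hk0 ρ lst
      have hJ := hkJ ρ lst
      simp only [hl, if_pos, mul_zero, add_zero] at h0 hJ
      show (∑ i, G ρ i * W j i lst) = 0
      rw [hsum]
      linear_combination hJ - h0
    · intro c hclst
      have hc' : (c : ℕ) ≠ t - 1 := by
        intro h
        exact hclst (Fin.ext (by rw [h, hl]))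
      funext ρ
      have h0 := hk0 ρ c
      have hJ := hkJ ρ c
      simp only [if_neg hc'] at h0 hJ
      show (∑ i, G ρ i * W j i c) + (∑ i, Pdef t x z u c ρ i * W j i lst) = 0
      rw [hsum, hsum]
      simp only [Pdef]
      linear_combination hJ - h0
  · -- support
    intro j i hiS hiw
    funext c
    have h1 : i ≠ e 0 := fun h => hiS (h ▸ heS 0)
    have h2 : i ≠ e j.succ := fun h => hiS (h ▸ heS j.succ)
    simp only [hW, if_neg hiw, if_neg h1, if_neg h2, add_zero, Pi.zero_apply]
  · -- rank at istar
    have hrow : (fun j => W j istar)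
        = fun j => (fun c => rv x z istar (e 0) c - rv x z istar (e j.succ) c) := by
      funext j c
      have hA : istar ≠ e 0 := fun h => hew 0 h.symm
      have hB : istar ≠ e j.succ := fun h => hew j.succ h.symm
      simp [hW, hA, hB]
    rw [hrow, finrank_span_eq_card
      (indep ht x z istar e (hx istar) (fun k => hx (e k)) hdk hdist), Fintype.card_fin]
  · -- rank at helpers
    intro i hi
    obtain ⟨k, hk⟩ : ∃ k, e k = i := ⟨Finset.equivFinOfCardEq hS ⟨i, hi⟩, by simp [he]⟩
    subst hk
    by_cases hk0 : k = 0
    · subst hk0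
      have hrow : (fun j => W j (e 0)) = fun _ => -(fun c => mv x z istar (e 0) c) := by
        funext j c
        have h2 : e (0 : Fin (t+1)) ≠ e j.succ := fun h => (Fin.succ_ne_zero j) (heinj h).symm
        simp [hW, hew 0, h2]
      have hne : Nonempty (Fin t) := ⟨lst⟩
      rw [hrow]
      rw [Set.range_const]
      rw [finrank_span_singleton (neg_ne_zero.mpr (hmne 0))]
    · have hrow : (fun j => W j (e k))
          = fun j => if k = j.succ then (fun c => mv x z istar (e k) c) else 0 := by
        funext j c
        have h1 : e k ≠ e 0 := fun h => hk0 (heinj h)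
        by_cases hkj : k = j.succ
        · have hA := hew j.succ
          have hB : e j.succ ≠ e 0 := fun h => Fin.succ_ne_zero j (heinj h)
          simp [hW, hkj, hA, hB]
        · have h2 : e k ≠ e j.succ := fun h => hkj (heinj h)
          simp [hW, hkj, hew k, h1, h2]
      rw [hrow]
      have hspan : Submodule.span K (Set.range fun j : Fin t =>
            if k = j.succ then (fun c => mv x z istar (e k) c : Fin t → K) else 0)
          = Submodule.span K {(fun c => mv x z istar (e k) c : Fin t → K)} := by
        apply le_antisymm
        · rw [Submodule.span_le]
          rintro v ⟨j, rfl⟩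
          dsimp only
          by_cases hkj : k = j.succ
          · rw [if_pos hkj]
            exact Submodule.subset_span rfl
          · rw [if_neg hkj]
            exact (Submodule.span K _).zero_mem
        · rw [Submodule.span_le]
          rintro v rfl
          apply Submodule.subset_span
          refine ⟨k.pred hk0, ?_⟩
          dsimp only
          rw [if_pos (Fin.succ_pred k hk0).symm]
      rw [hspan, finrank_span_singleton (hmne k)]

lemma pairIndep {n : ℕ} {K : Type*} [Field K] (G : Matrix (Fin 2) (Fin n) K)
    (hMDS : ∀ s : Finset (Fin n), s.card = 2 →
      LinearIndependent K (fun j : s => fun r : Fin 2 => G r j.1))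
    {i j : Fin n} (hij : i ≠ j) {ca cb : K}
    (hab : ∀ r, ca * G r i + cb * G r j = 0) : ca = 0 ∧ cb = 0 := by
  have hcard : ({i, j} : Finset (Fin n)).card = 2 := Finset.card_pair hij
  have hli := hMDS {i, j} hcard
  rw [Fintype.linearIndependent_iff] at hli
  have hsum : ∑ v : ({i, j} : Finset (Fin n)),
      (fun w : Fin n => (if w = i then ca else cb) • (fun r => G r w)) v = 0 := by
    rw [Finset.sum_coe_sort ({i, j} : Finset (Fin n))
      (fun w : Fin n => (if w = i then ca else cb) • (fun r => G r w))]
    rw [Finset.sum_pair hij]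
    funext r
    simp only [Pi.add_apply, Pi.smul_apply, smul_eq_mul, if_pos rfl, if_neg (Ne.symm hij)]
    exact hab r
  have hz := hli (fun v => if (v : Fin n) = i then ca else cb) hsum
  constructor
  · have := hz ⟨i, by simp⟩
    simpa using this
  · have := hz ⟨j, by simp⟩
    simpa [if_neg (Ne.symm hij)] using this

theorem perfect_bandwidth_k_two_any_d' {n t : ℕ} (K : Type*) [Field K] [Fintype K]
    (ht : 2 ≤ t) (htn : t + 2 ≤ n)
    (G : Matrix (Fin 2) (Fin n) K)
    (hMDS : ∀ s : Finset (Fin n), s.card = 2 →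
      LinearIndependent K (fun j : s => fun r : Fin 2 => G r j.1))
    (hq : (n : ℝ) * ((n - 1).choose (t + 1)) *
      (1 - ∏ i ∈ Finset.Icc 1 (t - 1), (1 - ((Fintype.card K : ℝ))⁻¹ ^ i)) < 1) :
    ∃ P : Fin t → Matrix (Fin 2) (Fin n) K,
      ∀ (istar : Fin n) (S : Finset (Fin n)), S.card = t + 1 → istar ∉ S →
        ∃ W : Fin t → Matrix (Fin n) (Fin t) K,
          (∀ j, LineDual G P ⟨t - 1, Nat.sub_lt (by omega) Nat.one_pos⟩ (W j)) ∧
          (∀ (j) (i : Fin n), i ∉ S → i ≠ istar → W j i = 0) ∧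
          Module.finrank K (Submodule.span K (Set.range fun j => W j istar)) = t ∧
          ∀ i ∈ S,
            Module.finrank K (Submodule.span K (Set.range fun j => W j i)) = 1 := by
  classical
  -- Step 1: the field is large: n < |K|
  have hcard2 : 1 < Fintype.card K := Fintype.one_lt_card
  have hnq : n < Fintype.card K := by
    set q : ℝ := ((Fintype.card K : ℕ) : ℝ) with hqdef
    have h2q : (2 : ℝ) ≤ q := by
      have h2n : (2:ℕ) ≤ Fintype.card K := hcard2
      rw [hqdef]
      exact_mod_cast h2n
    have hqpos : (0 : ℝ) < q := by linarith
    have hinv1 : q⁻¹ ≤ 1 := by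
      rw [inv_le_one_iff₀]
      right; linarith
    have hinvnn : (0 : ℝ) ≤ q⁻¹ := inv_nonneg.mpr hqpos.le
    have hfac : ∀ i ∈ Finset.Icc 1 (t-1), 0 ≤ 1 - q⁻¹ ^ i ∧ 1 - q⁻¹ ^ i ≤ 1 := by
      intro i _
      have h1 : q⁻¹ ^ i ≤ 1 := pow_le_one₀ hinvnn hinv1
      have h0 : 0 ≤ q⁻¹ ^ i := pow_nonneg hinvnn i
      constructor <;> linarith
    have h1m : 1 ∈ Finset.Icc 1 (t-1) := by
      rw [Finset.mem_Icc]
      omega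
    have hprodle : ∏ i ∈ Finset.Icc 1 (t-1), (1 - q⁻¹ ^ i) ≤ 1 - q⁻¹ := by
      rw [← Finset.mul_prod_erase _ _ h1m, pow_one]
      have hr1 : ∏ i ∈ (Finset.Icc 1 (t-1)).erase 1, (1 - q⁻¹ ^ i) ≤ 1 :=
        Finset.prod_le_one (fun i hi => (hfac i (Finset.mem_of_mem_erase hi)).1)
          (fun i hi => (hfac i (Finset.mem_of_mem_erase hi)).2)
      have hr0 : (0:ℝ) ≤ 1 - q⁻¹ := by linarith
      nlinarith [Finset.prod_nonneg (fun i hi => (hfac i (Finset.mem_of_mem_erase hi)).1)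
        (s := (Finset.Icc 1 (t-1)).erase 1) (f := fun i => 1 - q⁻¹ ^ i)]
    have hge : q⁻¹ ≤ 1 - ∏ i ∈ Finset.Icc 1 (t-1), (1 - q⁻¹ ^ i) := by linarith
    have hC : (1:ℝ) ≤ (((n-1).choose (t+1) : ℕ) : ℝ) := by
      have := Nat.choose_pos (show t + 1 ≤ n - 1 by omega)
      exact_mod_cast this
    have hn0 : (0:ℝ) ≤ (n:ℝ) := Nat.cast_nonneg n
    have hkey : (n:ℝ) * q⁻¹ < 1 := by
      have hp1 : (0:ℝ) ≤ 1 - ∏ i ∈ Finset.Icc 1 (t-1), (1 - q⁻¹ ^ i) :=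
        le_trans hinvnn hge
      have hle : (n:ℝ) * q⁻¹ ≤ (n:ℝ) * (((n-1).choose (t+1) : ℕ) : ℝ) *
          (1 - ∏ i ∈ Finset.Icc 1 (t-1), (1 - q⁻¹ ^ i)) := by
        calc (n:ℝ) * q⁻¹ ≤ (n:ℝ) * (1 - ∏ i ∈ Finset.Icc 1 (t-1), (1 - q⁻¹ ^ i)) :=
              mul_le_mul_of_nonneg_left hge hn0
          _ ≤ (n:ℝ) * (((n-1).choose (t+1) : ℕ) : ℝ) *
              (1 - ∏ i ∈ Finset.Icc 1 (t-1), (1 - q⁻¹ ^ i)) := by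
              nlinarith [mul_nonneg hn0 hp1]
      exact lt_of_le_of_lt hle hq
    have hfin : (n : ℝ) < q := by
      rw [← div_eq_mul_inv, div_lt_one hqpos] at hkey
      exact hkey
    rw [hqdef] at hfin
    exact_mod_cast hfin
  -- Step 2: nonzero columns
  have hnontriv : Nontrivial (Fin n) := by
    have : 2 ≤ n := by omega
    exact Fin.nontrivial_iff_two_le.mpr this
  have hcolnz : ∀ i : Fin n, ¬(G 0 i = 0 ∧ G 1 i = 0) := by
    intro i ⟨h0, h1⟩
    obtain ⟨j, hj⟩ := exists_ne i
    have hcomb : ∀ r, (1:K) * G r i + 0 * G r j = 0 := by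
      intro r
      fin_cases r <;> simp [h0, h1]
    exact one_ne_zero (pairIndep G hMDS (Ne.symm hj) hcomb).1
  -- Step 3: choose the direction parameter s
  obtain ⟨sv, hsv⟩ : ∃ sv : K, sv ∉ Finset.image (fun i => G 1 i / G 0 i) Finset.univ := by
    by_contra hcon
    push_neg at hcon
    have huniv : Finset.image (fun i => G 1 i / G 0 i) Finset.univ = Finset.univ :=
      Finset.eq_univ_iff_forall.mpr hcon
    have hle : (Fintype.card K : ℕ) ≤ n := by
      calc Fintype.card K = (Finset.image (fun i => G 1 i / G 0 i) Finset.univ).card := by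
            rw [huniv, Finset.card_univ]
        _ ≤ (Finset.univ : Finset (Fin n)).card := Finset.card_image_le
        _ = n := by rw [Finset.card_univ, Fintype.card_fin]
    omega
  -- Step 4: the coordinates
  set x : Fin n → K := fun i => G 1 i - sv * G 0 i with hxdef
  have hx : ∀ i, x i ≠ 0 := by
    intro i h
    rw [hxdef] at h
    simp only [sub_eq_zero] at h
    by_cases h0 : G 0 i = 0
    · rw [h0, mul_zero] at h
      exact hcolnz i ⟨h0, h⟩
    · apply hsv
      rw [Finset.mem_image]
      exact ⟨i, Finset.mem_univ i, by rw [h, mul_div_assoc, div_self h0, mul_one]⟩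
  set z : Fin n → K := fun i => G 0 i / x i with hzdef
  have hG : ∀ ρ i, G ρ i = x i * (![0,1] : Fin 2 → K) ρ + x i * z i * (![1,sv] : Fin 2 → K) ρ := by
    intro ρ i
    have hxi := hx i
    fin_cases ρ
    · show G 0 i = x i * 0 + x i * z i * 1
      rw [hzdef]
      field_simp
      ring
    · show G 1 i = x i * 1 + x i * z i * sv
      rw [hzdef, hxdef]
      have hxi' : G 1 i - sv * G 0 i ≠ 0 := hxi
      field_simp
      ring
  have hzinj : Function.Injective z := by
    intro i j hzij
    by_contra hne
    have hcomb : ∀ r, x j * G r i + (-(x i)) * G r j = 0 := by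
      intro r
      rw [hG r i, hG r j, hzij]
      ring
    exact hx j (pairIndep G hMDS hne hcomb).1
  exact ⟨Pdef t x z ![1,sv],
    fun istar S hS hw => scheme ht x z ![1,sv] ![0,1] hx hzinj G hG istar S hS hw⟩

end LBWork


/-- for `k = 2`, `2 ≤ t ≤ n-2`, and field size `q` large enough that
`n·C(n-1,t+1)·(1 - ∏_{i=1}^{t-1}(1-q^{-i})) < 1`, there exist piggybacking matrices
making the linebacking code on MDS base `G ∈ F_q^{2×n}` achieve perfect bandwidth
`t+1` in the "any d" regime: every node `i*` can be repaired from every repair set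
`S` of size `t+1` by a linear repair scheme downloading one symbol per helper. -/
theorem perfect_bandwidth_k_two_any_d {n t : ℕ} (K : Type*) [Field K] [Fintype K]
    (ht : 2 ≤ t) (htn : t + 2 ≤ n)
    (G : Matrix (Fin 2) (Fin n) K) (hMDS : IsMDS G)
    (hq : (n : ℝ) * ((n - 1).choose (t + 1)) *
      (1 - ∏ i ∈ Finset.Icc 1 (t - 1), (1 - ((Fintype.card K : ℝ))⁻¹ ^ i)) < 1) :
    ∃ P : Fin t → Matrix (Fin 2) (Fin n) K,
      ∀ (istar : Fin n) (S : Finset (Fin n)), S.card = t + 1 → istar ∉ S →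
        ∃ W : Fin t → Matrix (Fin n) (Fin t) K,
          (∀ j, LineDual G P ⟨t - 1, by omega⟩ (W j)) ∧
          (∀ (j) (i : Fin n), i ∉ S → i ≠ istar → W j i = 0) ∧
          Module.finrank K (Submodule.span K (Set.range fun j => W j istar)) = t ∧
          ∀ i ∈ S,
            Module.finrank K (Submodule.span K (Set.range fun j => W j i)) = 1 := by
  exact LBWork.perfect_bandwidth_k_two_any_d' K ht htn G hMDS hq
end

section
/- If there exists an (n,k) piggybacking code over F_q with t ≥ 3 substripes admitting, for every node i*, a linear repair scheme from some set of nodes with bandwidth b, then there exists an (n,k) piggybacking code over F_q with t−1 substripes admitting, for every node i*, a linear repair scheme with bandwidth at most b−1. In particular, if a perfect-bandwidth (b = k+t−1) piggybacking code exists with t substripes, one exists with t−1 substripes for the same n, k, q. -/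
open Matrix

section helpers

variable {n t k : ℕ} {K : Type*} [Field K] [Fintype K]

/-- The defining (linear) map of the piggybacking dual. -/
noncomputable def piggyMap (G : Matrix (Fin k) (Fin n) K)
    (P : Fin t → Fin t → Matrix (Fin k) (Fin n) K) :
    Matrix (Fin n) (Fin t) K →ₗ[K] (Fin t → (Fin k → K)) where
  toFun W := fun i =>
    G *ᵥ (fun r => W r i) + ∑ j ∈ Finset.Ioi i, (P i j) *ᵥ (fun r => W r j)
  map_add' W₁ W₂ := by
    funext i x
    simp only [Matrix.add_apply, Matrix.mulVec, dotProduct, Pi.add_apply,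
      Finset.sum_apply, mul_add, Finset.sum_add_distrib]
    abel
  map_smul' a W := by
    funext i x
    simp only [Matrix.smul_apply, Matrix.mulVec, dotProduct, Pi.add_apply,
      Pi.smul_apply, Finset.sum_apply, smul_eq_mul, mul_add, Finset.mul_sum,
      RingHom.id_apply, mul_left_comm]

theorem piggyDual_iff_piggyMap {G : Matrix (Fin k) (Fin n) K}
    {P : Fin t → Fin t → Matrix (Fin k) (Fin n) K} {W : Matrix (Fin n) (Fin t) K} :
    PiggyDual G P W ↔ piggyMap G P W = 0 := by
  constructor
  · intro h; funext i; exact h i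
  · intro h i; exact congrFun h i

theorem piggyDual_sum {G : Matrix (Fin k) (Fin n) K}
    {P : Fin t → Fin t → Matrix (Fin k) (Fin n) K} {ι : Type*} (s : Finset ι)
    (d : ι → K) (W : ι → Matrix (Fin n) (Fin t) K)
    (h : ∀ j ∈ s, PiggyDual G P (W j)) :
    PiggyDual G P (∑ j ∈ s, d j • W j) := by
  rw [piggyDual_iff_piggyMap, map_sum]
  refine Finset.sum_eq_zero fun j hj => ?_
  rw [_root_.map_smul, (piggyDual_iff_piggyMap).mp (h j hj), smul_zero]

theorem piggyDual_add_smul {G : Matrix (Fin k) (Fin n) K}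
    {P : Fin t → Fin t → Matrix (Fin k) (Fin n) K}
    {W₁ W₂ : Matrix (Fin n) (Fin t) K} (a : K)
    (h₁ : PiggyDual G P W₁) (h₂ : PiggyDual G P W₂) :
    PiggyDual G P (W₁ + a • W₂) := by
  rw [piggyDual_iff_piggyMap, map_add, _root_.map_smul,
    (piggyDual_iff_piggyMap).mp h₁, (piggyDual_iff_piggyMap).mp h₂, smul_zero, add_zero]

theorem Ioi_succ_eq (i : Fin t) :
    Finset.Ioi (i.succ) = (Finset.Ioi i).map (Fin.succEmb t) := by
  ext j
  simp only [Finset.mem_Ioi, Finset.mem_map, Fin.succEmb, Function.Embedding.coeFn_mk]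
  constructor
  · intro hj
    have hj0 : j ≠ 0 := fun hj0 => by simp [hj0] at hj
    refine ⟨j.pred hj0, ?_, j.succ_pred hj0⟩
    rw [← Fin.succ_lt_succ_iff, j.succ_pred hj0]
    exact hj
  · rintro ⟨a, ha, rfl⟩
    exact Fin.succ_lt_succ_iff.mpr ha

theorem piggyDual_shift {G : Matrix (Fin k) (Fin n) K}
    {P : Fin (t + 1) → Fin (t + 1) → Matrix (Fin k) (Fin n) K}
    {W : Matrix (Fin n) (Fin (t + 1)) K} (hW : PiggyDual G P W) :
    PiggyDual G (fun i j => P i.succ j.succ)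
      (Matrix.of fun r (i : Fin t) => W r i.succ) := by
  intro i
  have h := hW i.succ
  rw [Ioi_succ_eq, Finset.sum_map] at h
  simpa [Fin.succEmb] using h

/-- A dual matrix supported on a single node must vanish (when `k ≤ n`, `1 ≤ k`). -/
theorem dual_single_support_eq_zero (hk : 1 ≤ k) (hn : k ≤ n)
    {G : Matrix (Fin k) (Fin n) K} (hMDS : IsMDS G)
    {P : Fin t → Fin t → Matrix (Fin k) (Fin n) K}
    {W : Matrix (Fin n) (Fin t) K} (hW : PiggyDual G P W)
    (istar : Fin n) (hsupp : ∀ i, i ≠ istar → W i = 0) : W = 0 := by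
  classical
  -- the `istar` column of `G` is nonzero
  obtain ⟨s, hs, hcard⟩ := Finset.exists_superset_card_eq
    (s := {istar}) (by simpa using hk) (by simpa using hn)
  have hmem : istar ∈ s := hs (Finset.mem_singleton_self istar)
  have hli := hMDS s hcard
  have hcol : (fun r : Fin k => G r istar) ≠ 0 :=
    hli.ne_zero (⟨istar, hmem⟩ : s)
  -- every column of `W` vanishes
  have key : ∀ j : Fin t, (fun r => W r j) = (0 : Fin n → K) := by
    by_contra hc
    push_neg at hc
    obtain ⟨j, hj⟩ := hc
    have hT : (Finset.univ.filter (fun j : Fin t => (fun r => W r j) ≠ 0)).Nonempty :=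
      ⟨j, by simp [hj]⟩
    set T := Finset.univ.filter (fun j : Fin t => (fun r => W r j) ≠ 0) with hTdef
    set j0 := T.max' hT with hj0def
    have hj0 : (fun r => W r j0) ≠ 0 := (Finset.mem_filter.mp (T.max'_mem hT)).2
    have hzero : ∀ j' ∈ Finset.Ioi j0, (fun r => W r j') = (0 : Fin n → K) := by
      intro j' hj'
      by_contra h'
      have hmem' : j' ∈ T := Finset.mem_filter.mpr ⟨Finset.mem_univ _, h'⟩
      exact absurd (Finset.le_max' T j' hmem') (not_le.mpr (Finset.mem_Ioi.mp hj'))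
    have hd := hW j0
    rw [Finset.sum_congr rfl (fun j' hj' => by rw [hzero j' hj', Matrix.mulVec_zero])] at hd
    simp only [Finset.sum_const_zero, add_zero] at hd
    -- the column is supported at `istar`
    have hval : ∀ a : Fin k, G a istar * W istar j0 = 0 := by
      intro a
      have := congrFun hd a
      rw [show (0 : Fin k → K) a = 0 from rfl] at this
      rw [Matrix.mulVec, dotProduct] at this
      rwa [Finset.sum_eq_single istar
        (fun r _ hr => by rw [show W r j0 = 0 from by rw [hsupp r hr]; rfl, mul_zero])
        (fun h => absurd (Finset.mem_univ istar) h)] at this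
    have hW0 : W istar j0 = 0 := by
      by_contra h0
      apply hcol
      funext a
      have := hval a
      exact (mul_eq_zero.mp this).resolve_right h0
    apply hj0
    funext r
    show W r j0 = 0
    by_cases hr : r = istar
    · rw [hr]; exact hW0
    · rw [hsupp r hr]; rfl
  ext r j
  exact congrFun (key j) r

theorem finrank_span_single_basis :
    Module.finrank K (Submodule.span K
      (Set.range fun j : Fin t => (Pi.single j 1 : Fin t → K))) = t := by
  classical
  have h1 : (fun j : Fin t => (Pi.single j 1 : Fin t → K)) =
      ⇑(Pi.basisFun K (Fin t)) := by
    funext j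
    exact (Pi.basisFun_apply K (Fin t) j).symm
  rw [h1, Module.Basis.span_eq, finrank_top, Module.finrank_fin_fun]

theorem matrix_row_sum_smul {m' : ℕ} (c : Fin m' → K)
    (W : Fin m' → Matrix (Fin n) (Fin t) K) (i : Fin n) :
    (∑ m, c m • W m) i = ∑ m, c m • (W m i) := by
  funext cc
  rw [Matrix.sum_apply, Finset.sum_apply]
  rfl

end helpers

/-- if there is an `(n,k)` piggybacking code with `t+1 ≥ 3` substripes
in which every node admits a linear repair scheme from some repair set with bandwidth
at most `b` (in the "some d" regime), then there is an `(n,k)` piggybacking code over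
the same field with `t` substripes in which every node admits a linear repair scheme
with bandwidth at most `b - 1`. -/
theorem substripe_reduction {n k b t : ℕ} (K : Type*) [Field K] [Fintype K]
    (hk : 2 ≤ k) (ht : 2 ≤ t)
    (h : ∃ (G : Matrix (Fin k) (Fin n) K)
        (P : Fin (t + 1) → Fin (t + 1) → Matrix (Fin k) (Fin n) K),
      IsMDS G ∧
      ∀ istar : Fin n, ∃ S : Finset (Fin n), istar ∉ S ∧
        ∃ W : Fin (t + 1) → Matrix (Fin n) (Fin (t + 1)) K,
          (∀ j, PiggyDual G P (W j)) ∧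
          (∀ (j) (i : Fin n), i ∉ S → i ≠ istar → W j i = 0) ∧
          Module.finrank K
            (Submodule.span K (Set.range fun j => W j istar)) = t + 1 ∧
          ∑ i ∈ S,
            Module.finrank K (Submodule.span K (Set.range fun j => W j i)) ≤ b) :
    ∃ (G' : Matrix (Fin k) (Fin n) K)
        (P' : Fin t → Fin t → Matrix (Fin k) (Fin n) K),
      IsMDS G' ∧
      ∀ istar : Fin n, ∃ S : Finset (Fin n), istar ∉ S ∧
        ∃ W : Fin t → Matrix (Fin n) (Fin t) K,
          (∀ j, PiggyDual G' P' (W j)) ∧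
          (∀ (j) (i : Fin n), i ∉ S → i ≠ istar → W j i = 0) ∧
          Module.finrank K (Submodule.span K (Set.range fun j => W j istar)) = t ∧
          ∑ i ∈ S,
            Module.finrank K (Submodule.span K (Set.range fun j => W j i))
              ≤ b - 1 := by
  classical
  by_cases hnk : n < k
  · -- degenerate case: no `k`-subsets of `Fin n` exist, so any code is MDS and
    -- the zero code has full dual.
    refine ⟨0, 0, ?_, ?_⟩
    · intro s hs
      exact absurd (hs ▸ (s.card_le_univ.trans_eq (Finset.card_univ.trans (Fintype.card_fin n))))
        (not_le.mpr hnk)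
    · intro istar
      refine ⟨∅, Finset.notMem_empty istar,
        fun j => Matrix.of fun r i => if r = istar then (Pi.single j 1 : Fin t → K) i else 0,
        ?_, ?_, ?_, by simp⟩
      · intro j i
        simp only [Pi.zero_apply, Matrix.zero_mulVec, Finset.sum_const_zero, add_zero]
      · intro j i _ hi
        funext cc
        simp [Matrix.of_apply, hi]
      · have : (fun j : Fin t => (Matrix.of fun r i =>
            if r = istar then (Pi.single j 1 : Fin t → K) i else 0 :
            Matrix (Fin n) (Fin t) K) istar) = fun j : Fin t => (Pi.single j 1 : Fin t → K) := by
          funext j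
          funext i
          simp [Matrix.of_apply]
        rw [this, finrank_span_single_basis]
  · push_neg at hnk
    obtain ⟨G, P, hMDS, hrep⟩ := h
    refine ⟨G, fun i j => P i.succ j.succ, hMDS, fun istar => ?_⟩
    obtain ⟨S, hiS, W, hdual, hsupp, hrank, hbw⟩ := hrep istar
    -- the rows of the dual matrices at `istar` form a basis of `K^(t+1)`
    set f : Fin (t + 1) → (Fin (t + 1) → K) := fun j => W j istar with hf
    have hspan : Submodule.span K (Set.range f) = ⊤ := by
      apply Submodule.eq_top_of_finrank_eq
      rw [hrank, Module.finrank_fin_fun]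
    have hli : LinearIndependent K f := by
      rw [linearIndependent_iff_card_eq_finrank_span]
      rw [Fintype.card_fin]
      rw [Set.finrank]
      rw [hrank]
    let B : Module.Basis (Fin (t + 1)) K (Fin (t + 1) → K) := Module.Basis.mk hli hspan.ge
    -- normalized dual matrices whose rows at `istar` are the standard basis
    set c : Fin (t + 1) → Fin (t + 1) → K := fun a => B.repr (Pi.single a 1) with hc
    set U : Fin (t + 1) → Matrix (Fin n) (Fin (t + 1)) K :=
      fun a => ∑ m, c a m • W m with hU
    have hUdual : ∀ a, PiggyDual G P (U a) :=
      fun a => piggyDual_sum Finset.univ (c a) W (fun j _ => hdual j)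
    have hUistar : ∀ a, U a istar = Pi.single a 1 := by
      intro a
      have h1 : U a istar = ∑ m, c a m • (W m istar) := by
        simp only [hU]
        exact matrix_row_sum_smul _ _ _
      rw [h1]
      have h2 : ∀ m, W m istar = B m := fun m => (Module.Basis.mk_apply hli hspan.ge m).symm
      calc ∑ m, c a m • (W m istar) = ∑ m, B.repr (Pi.single a 1) m • B m := by
            refine Finset.sum_congr rfl fun m _ => by rw [h2, hc]
        _ = Pi.single a 1 := B.sum_repr _
    have hUsupp : ∀ a i, i ∉ S → i ≠ istar → U a i = 0 := by
      intro a i hi hi'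
      have h1 : U a i = ∑ m, c a m • (W m i) := by
        simp only [hU]; exact matrix_row_sum_smul _ _ _
      rw [h1]
      refine Finset.sum_eq_zero fun m _ => by rw [hsupp m i hi hi', smul_zero]
    have hUrow : ∀ a i, U a i ∈ Submodule.span K (Set.range fun j => W j i) := by
      intro a i
      have h1 : U a i = ∑ m, c a m • (W m i) := by
        simp only [hU]; exact matrix_row_sum_smul _ _ _
      rw [h1]
      exact Submodule.sum_mem _ fun m _ =>
        Submodule.smul_mem _ _ (Submodule.subset_span ⟨m, rfl⟩)
    -- `U 0` has a nonzero row inside `S`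
    have hex : ∃ i0 ∈ S, U 0 i0 ≠ 0 := by
      by_contra hcon
      push_neg at hcon
      have hz : ∀ i, i ≠ istar → U 0 i = 0 := by
        intro i hi
        by_cases hiS' : i ∈ S
        · exact hcon i hiS'
        · exact hUsupp 0 i hiS' hi
      have := dual_single_support_eq_zero (by omega) hnk hMDS (hUdual 0) istar hz
      have h0 : U 0 istar = 0 := by rw [this]; rfl
      rw [hUistar 0] at h0
      have := congrFun h0 0
      rw [Pi.single_eq_same] at this
      exact one_ne_zero this
    obtain ⟨i0, hi0S, hU0⟩ := hex
    obtain ⟨ℓ, hℓ⟩ : ∃ ℓ, U 0 i0 ℓ ≠ 0 := by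
      by_contra hcon
      push_neg at hcon
      exact hU0 (funext hcon)
    -- the final combinations
    set a : Fin t → K := fun j => -(U j.succ i0 ℓ) * (U 0 i0 ℓ)⁻¹ with ha
    set V : Fin t → Matrix (Fin n) (Fin (t + 1)) K :=
      fun j => U j.succ + a j • U 0 with hV
    have hVdual : ∀ j, PiggyDual G P (V j) :=
      fun j => piggyDual_add_smul (a j) (hUdual j.succ) (hUdual 0)
    have hVrow : ∀ j i, V j i ∈ Submodule.span K (Set.range fun j' => W j' i) := by
      intro j i
      simp only [hV]
      show U j.succ i + a j • U 0 i ∈ _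
      exact Submodule.add_mem _ (hUrow j.succ i) (Submodule.smul_mem _ _ (hUrow 0 i))
    have hVℓ : ∀ j, V j i0 ℓ = 0 := by
      intro j
      simp only [hV]
      show U j.succ i0 ℓ + a j * U 0 i0 ℓ = 0
      simp only [ha]
      field_simp
      ring
    have hVsupp : ∀ j i, i ∉ S → i ≠ istar → V j i = 0 := by
      intro j i hi hi'
      simp only [hV]
      show U j.succ i + a j • U 0 i = 0
      rw [hUsupp j.succ i hi hi', hUsupp 0 i hi hi', smul_zero, add_zero]
    have hVistar : ∀ j i, V j istar i.succ = (Pi.single j 1 : Fin t → K) i := by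
      intro j i
      simp only [hV]
      show (U j.succ istar) i.succ + a j • (U 0 istar) i.succ = _
      rw [show U (Fin.succ j) istar = Pi.single j.succ 1 from hUistar _,
        show U 0 istar = Pi.single 0 1 from hUistar _]
      rw [Pi.single_apply, Pi.single_apply, Pi.single_apply]
      rw [if_neg (Fin.succ_ne_zero i)]
      simp [Fin.succ_inj]
    refine ⟨S, hiS, fun j => Matrix.of fun r (i : Fin t) => V j r i.succ, 
      fun j => piggyDual_shift (hVdual j), ?_, ?_, ?_⟩
    · intro j i hi hi'
      funext cc
      simp only [Matrix.of_apply]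
      rw [hVsupp j i hi hi']
      rfl
    · have : (fun j : Fin t => (Matrix.of fun r (i : Fin t) => V j r i.succ :
          Matrix (Fin n) (Fin t) K) istar) =
          fun j : Fin t => (Pi.single j 1 : Fin t → K) := by
        funext j
        funext i
        exact hVistar j i
      rw [this, finrank_span_single_basis]
    · -- bandwidth accounting
      set π : (Fin (t + 1) → K) →ₗ[K] (Fin t → K) := LinearMap.funLeft K K Fin.succ with hπ
      have hπapply : ∀ (v : Fin (t + 1) → K),
          π v = fun i : Fin t => v i.succ := fun v => rfl
      set oldr : Fin n → ℕ := fun i =>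
        Module.finrank K (Submodule.span K (Set.range fun j => W j i)) with holdr
      set newr : Fin n → ℕ := fun i => Module.finrank K (Submodule.span K
        (Set.range fun j : Fin t =>
          ((Matrix.of fun r (i' : Fin t) => V j r i'.succ : Matrix (Fin n) (Fin t) K) i))) 
        with hnewr
      have hnewle : ∀ i : Fin n, Submodule.span K (Set.range fun j : Fin t =>
          ((Matrix.of fun r (i' : Fin t) => V j r i'.succ : Matrix (Fin n) (Fin t) K) i)) ≤
          Submodule.map π (Submodule.span K (Set.range fun j => W j i)) := by
        intro i
        rw [Submodule.span_le]
        rintro _ ⟨j, rfl⟩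
        exact ⟨V j i, hVrow j i, rfl⟩
      have hb1 : ∀ i : Fin n, newr i ≤ oldr i := by
        intro i
        calc newr i ≤ Module.finrank K
              (Submodule.map π (Submodule.span K (Set.range fun j => W j i))) :=
            Submodule.finrank_mono (hnewle i)
          _ ≤ oldr i := Submodule.finrank_map_le π _
      have hb2 : newr i0 < oldr i0 := by
        have hproper : Submodule.span K (Set.range fun j => W j i0) ⊓
            LinearMap.ker (LinearMap.proj (R := K) (φ := fun _ : Fin (t+1) => K) ℓ) <
            Submodule.span K (Set.range fun j => W j i0) := by
          rw [SetLike.lt_iff_le_and_exists]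
          refine ⟨inf_le_left, U 0 i0, hUrow 0 i0, ?_⟩
          intro hmem
          exact hℓ (hmem.2)
        have hle : Submodule.span K (Set.range fun j : Fin t =>
            ((Matrix.of fun r (i' : Fin t) => V j r i'.succ : Matrix (Fin n) (Fin t) K) i0)) ≤
            Submodule.map π (Submodule.span K (Set.range fun j => W j i0) ⊓
              LinearMap.ker (LinearMap.proj (R := K) (φ := fun _ : Fin (t+1) => K) ℓ)) := by
          rw [Submodule.span_le]
          rintro _ ⟨j, rfl⟩
          exact ⟨V j i0, ⟨hVrow j i0, hVℓ j⟩, rfl⟩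
        calc newr i0 ≤ Module.finrank K (Submodule.map π
              (Submodule.span K (Set.range fun j => W j i0) ⊓
                LinearMap.ker (LinearMap.proj (R := K)
                  (φ := fun _ : Fin (t+1) => K) ℓ))) :=
            Submodule.finrank_mono hle
          _ ≤ Module.finrank K ↥(Submodule.span K (Set.range fun j => W j i0) ⊓
                LinearMap.ker (LinearMap.proj (R := K)
                  (φ := fun _ : Fin (t+1) => K) ℓ)) := Submodule.finrank_map_le π _
          _ < oldr i0 := Submodule.finrank_lt_finrank_of_lt hproper
      have hsum : (∑ i ∈ S, newr i) + 1 ≤ ∑ i ∈ S, oldr i := by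
        rw [← Finset.add_sum_erase _ newr hi0S, ← Finset.add_sum_erase _ oldr hi0S]
        have h1 : newr i0 + 1 ≤ oldr i0 := hb2
        have h2 : ∑ i ∈ S.erase i0, newr i ≤ ∑ i ∈ S.erase i0, oldr i :=
          Finset.sum_le_sum fun i _ => hb1 i
        omega
      have hfinal : (∑ i ∈ S, newr i) + 1 ≤ b := hsum.trans hbw
      show ∑ i ∈ S, newr i ≤ b - 1
      omega
end
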